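/- arXiv:2111.11132 — 15 statements merged into one kernel-verified Lean document; each statement's English description precedes it below -/
import Mathlib

section
/- Let q be an odd prime power, c ∈ F_q^*, and f(X) = c(X^{q+1} - X^2) defined on F_{q^2}. Then 0 is the unique fixed point of f in F_{q^2}. -/
/-- 0 is the unique fixed point of f(X) = c(X^{q+1} - X^2) on F_{q^2}. -/
theorem stmt_0 (q : ℕ) (hq : Odd q) (K : Type*) [Field K] [Fintype K]
    (hK : Fintype.card K = q ^ 2)
    (c : K) (hcF : c ^ q = c) (hc0 : c ≠ 0) :
    ∀ α : K, c * (α ^ (q + 1) - α ^ 2) = α ↔ α = 0 := by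
  intro α
  constructor
  · intro h
    by_contra hα
    -- characteristic setup
    set p := ringChar K with hpdef
    haveI : CharP K p := ringChar.charP K
    have hp : p.Prime := CharP.char_is_prime K p
    obtain ⟨n, -, hcard⟩ := FiniteField.card K p
    have hq2 : q ^ 2 = p ^ (n : ℕ) := hK ▸ hcard
    haveI := Fact.mk hp
    have hq1 : 1 < q := by
      have h1 : 1 < q ^ 2 := hq2 ▸ Nat.one_lt_pow n.2.ne' hp.one_lt
      exact (Nat.one_lt_pow_iff (by norm_num)).mp h1
    have hqdvd : q ∣ p ^ (n : ℕ) := hq2 ▸ Dvd.intro_left q (by ring)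
    obtain ⟨m, hmn, hqm⟩ := (Nat.dvd_prime_pow hp).mp hqdvd
    have hpq : p ∣ q := by
      rcases Nat.eq_zero_or_pos m with rfl | hm
      · simp at hqm; omega
      · exact hqm ▸ dvd_pow_self p hm.ne'
    have hp2 : p ≠ 2 := by
      intro hpe
      rw [hpe] at hpq
      exact (Nat.not_even_iff_odd.mpr hq) (even_iff_two_dvd.mpr hpq)
    have h2K : (2 : K) ≠ 0 := by
      have : ((2 : ℕ) : K) ≠ 0 := by
        rw [Ne, CharP.cast_eq_zero_iff K p]
        intro hd
        exact hp2 ((Nat.prime_dvd_prime_iff_eq hp Nat.prime_two).mp hd)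
      simpa using this
    -- frobenius-type identity
    have hsub : ∀ x y : K, (x - y) ^ q = x ^ q - y ^ q := by
      intro x y
      rw [hqm]
      exact sub_pow_char_pow x y m
    have hαq2 : α ^ (q ^ 2) = α := by rw [← hK]; exact FiniteField.pow_card α
    -- raise the equation to the q-th power
    have h2 : c * (α * α ^ q - (α ^ q) ^ 2) = α ^ q := by
      have := congrArg (· ^ q) h
      simp only [mul_pow, hsub, hcF, ← pow_mul] at this
      calc c * (α * α ^ q - (α ^ q) ^ 2)
          = c * (α ^ ((q + 1) * q) - α ^ (2 * q)) := by
            rw [show (q + 1) * q = q ^ 2 + q by ring, pow_add, hαq2,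
              show 2 * q = q * 2 by ring, pow_mul]
        _ = α ^ q := this
    have h' : c * (α ^ q * α - α ^ 2) = α := by
      rw [pow_succ] at h; exact h
    by_cases hab : α ^ q = α
    · rw [hab] at h'
      apply hα
      have : c * 0 = α := by rw [← h']; ring_nf
      simpa using this.symm
    · have hne : α ^ q - α ≠ 0 := sub_ne_zero.mpr hab
      have hd : (α ^ q - α) * (c * (α ^ q + α) + 1) = 0 := by
        linear_combination h' - h2
      have hs : c * (α ^ q + α) = -1 := by
        rcases mul_eq_zero.mp hd with h0 | h0
        · exact absurd h0 hne
        · linear_combination h0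
      have h4 : (2 : K) * 2 * (c * (α * α ^ q)) = 0 := by
        linear_combination h' + h2 + (α ^ q + α) * hs
      have hab0 : α * α ^ q ≠ 0 :=
        mul_ne_zero hα (pow_ne_zero q hα)
      exact absurd h4 (by
        apply mul_ne_zero (mul_ne_zero h2K h2K) (mul_ne_zero hc0 hab0))
  · rintro rfl
    simp
end

section
/- Let q be an odd prime power, c ∈ F_q^*, and f(X) = c(X^{q+1} - X^2) on F_{q^2}. For α ∈ F_q^*, if -2αc is a nonzero square in F_q then f^{-1}(α) is empty, and if -2αc is a nonsquare in F_q then f^{-1}(α) has exactly 2 elements. -/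
/-- for α ∈ F_q^*, the preimage f^{-1}(α) is empty if -2αc is a
(nonzero) square in F_q, and has exactly 2 elements if -2αc is a nonsquare in F_q. -/
theorem stmt_2 (q : ℕ) (hq : Odd q) (K : Type*) [Field K] [Fintype K]
    (hK : Fintype.card K = q ^ 2)
    (c : K) (hcF : c ^ q = c) (hc0 : c ≠ 0)
    (α : K) (hαF : α ^ q = α) (hα0 : α ≠ 0) :
    ((∃ t : K, t ^ q = t ∧ t ^ 2 = -2 * α * c) →
      {x : K | c * (x ^ (q + 1) - x ^ 2) = α} = ∅) ∧
    ((¬ ∃ t : K, t ^ q = t ∧ t ^ 2 = -2 * α * c) →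
      Set.ncard {x : K | c * (x ^ (q + 1) - x ^ 2) = α} = 2) := by
  classical
  have hcard1 : 1 < Fintype.card K := Fintype.one_lt_card
  have hq1 : 1 < q := by
    rcases Nat.lt_or_ge q 2 with h | h
    · interval_cases q
      · simp at hq
      · simp [hK] at hcard1
    · omega
  -- characteristic setup
  obtain ⟨p, hcharp⟩ := CharP.exists K
  haveI := hcharp
  obtain ⟨n, hp, hcard⟩ := FiniteField.card K p
  haveI : Fact p.Prime := ⟨hp⟩
  -- q is a power of p
  have hqdvd : q ∣ p ^ (n : ℕ) := by
    rw [← hcard, hK]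
    exact dvd_pow_self q two_ne_zero
  obtain ⟨k, hkn, hqk⟩ := (Nat.dvd_prime_pow hp).mp hqdvd
  have hfrob : ∀ a b : K, (a - b) ^ q = a ^ q - b ^ q := by
    intro a b
    rw [hqk]
    exact sub_pow_char_pow a b k
  have hqq : ∀ a : K, (a ^ q) ^ q = a := by
    intro a
    rw [← pow_mul, ← sq, ← hK, FiniteField.pow_card]
  have hpodd : p ≠ 2 := by
    intro hp2
    have hk0 : k ≠ 0 := by
      intro h; rw [h, pow_zero] at hqk; omega
    have hdvd : 2 ∣ q := by
      rw [hqk, hp2]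
      exact dvd_pow_self 2 hk0
    rw [Nat.odd_iff] at hq
    omega
  have h2 : (2 : K) ≠ 0 := by
    intro h
    have h2' : ((2 : ℕ) : K) = 0 := by exact_mod_cast h
    have hdvd := (CharP.cast_eq_zero_iff K p 2).mp h2'
    exact hpodd ((Nat.prime_dvd_prime_iff_eq hp Nat.prime_two).mp hdvd)
  have hneg1 : ((-1 : K)) ^ q = -1 := Odd.neg_one_pow hq
  have h2q : (2 : K) ^ q = 2 := by
    have : (2 : K) = 1 + 1 := by norm_num
    rw [this, hqk, add_pow_char_pow, one_pow]
  have hu0 : (-2 * α * c : K) ≠ 0 := by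
    simp only [ne_eq, mul_eq_zero, neg_eq_zero, not_or]
    exact ⟨⟨by simpa using h2, hα0⟩, hc0⟩
  have huF : (-2 * α * c : K) ^ q = -2 * α * c := by
    have : (-2 * α * c : K) = (-1) * 2 * α * c := by ring
    rw [this, mul_pow, mul_pow, mul_pow, hneg1, h2q, hαF, hcF]
  -- key computation for elements of the preimage
  have main : ∀ x : K, c * (x ^ (q + 1) - x ^ 2) = α →
      c * x * (x ^ q - x) = α ∧ (c * (x ^ q - x)) ^ 2 = -2 * α * c := by
    intro x hx
    have h1 : c * x * (x ^ q - x) = α := by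
      rw [pow_succ] at hx
      linear_combination hx
    have h2' : c * x ^ q * (x - x ^ q) = α := by
      have h := congrArg (· ^ q) h1
      simp only [mul_pow] at h
      rw [hfrob, hcF, hqq, hαF] at h
      exact h
    refine ⟨h1, ?_⟩
    linear_combination (-c) * h1 + (-c) * h2'
  constructor
  · -- square case : empty
    rintro ⟨t, htF, ht⟩
    ext x
    simp only [Set.mem_setOf_eq, Set.mem_empty_iff_false, iff_false]
    intro hx
    obtain ⟨h1, hsq⟩ := main x hx
    set y := c * (x ^ q - x) with hy
    have hyq : y ^ q = -y := by
      rw [hy, mul_pow, hcF, hfrob, hqq]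
      ring
    have hfac : (y - t) * (y + t) = 0 := by linear_combination hsq - ht
    have hyF : y ^ q = y := by
      rcases mul_eq_zero.mp hfac with h | h
      · have hyt : y = t := by linear_combination h
        rw [hyt, htF]
      · have hyt : y = -t := by linear_combination h
        rw [hyt, neg_pow, hneg1, htF]; ring
    have hy2 : 2 * y = 0 := by linear_combination hyq - hyF
    have hy0 : y = 0 := by
      rcases mul_eq_zero.mp hy2 with h | h
      · exact absurd h h2
      · exact h
    rw [hy0] at hsq
    exact hu0 (by linear_combination -hsq)
  · -- nonsquare case : two elements
    intro hns
    have hchar2 : ringChar K ≠ 2 := by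
      have hrc : ringChar K = p := ringChar.eq K p
      rw [hrc]
      exact hpodd
    have hsqex : IsSquare (-2 * α * c : K) := by
      rw [FiniteField.isSquare_iff hchar2 hu0, hK]
      obtain ⟨m, hm⟩ := hq
      have hd : q ^ 2 / 2 = (q - 1) * (m + 1) := by
        have hq2 : q ^ 2 = 2 * ((q - 1) * (m + 1)) + 1 := by
          subst hm
          have : 2 * m + 1 - 1 = 2 * m := by omega
          rw [this]
          ring
        omega
      rw [hd, pow_mul]
      have hpow1 : (-2 * α * c : K) ^ (q - 1) = 1 := by
        have hstep : (-2 * α * c : K) ^ (q - 1) * (-2 * α * c) = -2 * α * c := by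
          rw [← pow_succ]
          have : q - 1 + 1 = q := by omega
          rw [this, huF]
        have h1 : (-2 * α * c : K) ^ (q - 1) * (-2 * α * c) = 1 * (-2 * α * c) := by
          rw [hstep, one_mul]
        exact mul_right_cancel₀ hu0 h1
      rw [hpow1, one_pow]
    obtain ⟨s, hs⟩ := hsqex
    have hs2 : s ^ 2 = -2 * α * c := by rw [sq]; exact hs.symm
    have hs0 : s ≠ 0 := by
      intro h
      rw [h] at hs2
      exact hu0 (by linear_combination -hs2)
    have hsqodd : s ^ q = -s := by
      have h1 : (s ^ q) ^ 2 = s ^ 2 := by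
        rw [← pow_mul, mul_comm, pow_mul, hs2, huF, ← hs2]
      have hfac : (s ^ q - s) * (s ^ q + s) = 0 := by linear_combination h1
      rcases mul_eq_zero.mp hfac with h | h
      · exact absurd ⟨s, by linear_combination h, hs2⟩ hns
      · linear_combination h
    set x₀ := α / s with hx0
    have hx00 : x₀ ≠ 0 := div_ne_zero hα0 hs0
    have hx0q : x₀ ^ q = -x₀ := by
      rw [hx0, div_pow, hαF, hsqodd, div_neg]
    have hmem : ∀ x : K, x = x₀ ∨ x = -x₀ → c * (x ^ (q + 1) - x ^ 2) = α := by
      intro x hx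
      have hxq : x ^ q = -x := by
        rcases hx with rfl | rfl
        · exact hx0q
        · rw [neg_pow, hneg1, hx0q]; ring
      have hx2 : x ^ 2 = x₀ ^ 2 := by rcases hx with rfl | rfl <;> ring
      have hxx : c * (x ^ (q + 1) - x ^ 2) = -2 * c * x₀ ^ 2 := by
        rw [pow_succ, hxq, ← hx2]
        ring
      rw [hxx, hx0, div_pow]
      field_simp
      linear_combination -hs2
    have hrev : ∀ x : K, c * (x ^ (q + 1) - x ^ 2) = α → x = x₀ ∨ x = -x₀ := by
      intro x hx
      obtain ⟨h1, hsq⟩ := main x hx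
      set y := c * (x ^ q - x) with hy
      have hfac : (y - s) * (y + s) = 0 := by linear_combination hsq - hs2
      have hxy : x * y = α := by rw [hy]; linear_combination h1
      rcases mul_eq_zero.mp hfac with h | h
      · left
        have hys : y = s := by linear_combination h
        rw [hys] at hxy
        rw [hx0, eq_div_iff hs0]
        exact hxy
      · right
        have hys : y = -s := by linear_combination h
        rw [hys] at hxy
        rw [hx0]
        field_simp
        linear_combination -hxy
    have hset : {x : K | c * (x ^ (q + 1) - x ^ 2) = α} = {x₀, -x₀} := by
      ext x
      simp only [Set.mem_setOf_eq, Set.mem_insert_iff, Set.mem_singleton_iff]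
      exact ⟨hrev x, hmem x⟩
    rw [hset]
    refine Set.ncard_pair ?_
    intro h
    have : 2 * x₀ = 0 := by linear_combination h
    rcases mul_eq_zero.mp this with h' | h'
    · exact h2 h'
    · exact hx00 h'
end

section
/- Let q be an odd prime power, c ∈ F_q^*, and f(X) = c(X^{q+1} - X^2) on F_{q^2}. If α ∈ F_q^* and γ ∈ F_{q^2} satisfies f(γ) = α, then f^{-1}(γ) is empty. -/
/-- if α ∈ F_q^* and f(γ) = α, then f^{-1}(γ) is empty. -/
theorem stmt_3 (q : ℕ) (hq : Odd q) (K : Type*) [Field K] [Fintype K]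
    (hK : Fintype.card K = q ^ 2)
    (c : K) (hcF : c ^ q = c) (hc0 : c ≠ 0)
    (α : K) (hαF : α ^ q = α) (hα0 : α ≠ 0)
    (γ : K) (hγ : c * (γ ^ (q + 1) - γ ^ 2) = α) :
    {x : K | c * (x ^ (q + 1) - x ^ 2) = γ} = ∅ := by
  ext x
  simp only [Set.mem_setOf_eq, Set.mem_empty_iff_false, iff_false]
  intro hx
  obtain ⟨p, hpc⟩ := CharP.exists K
  obtain ⟨n, hp, hcard⟩ := FiniteField.card K p
  haveI : Fact p.Prime := ⟨hp⟩
  -- q is a power of p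
  have hqdvd : q ∣ p ^ (n : ℕ) := by
    refine Dvd.intro q ?_
    rw [← hcard, hK]; ring
  obtain ⟨m, hmn, hqm⟩ := (Nat.dvd_prime_pow hp).mp hqdvd
  -- subtraction is compatible with q-th power
  have hsub : ∀ a b : K, (a - b) ^ q = a ^ q - b ^ q := by
    intro a b
    rw [hqm]
    exact sub_pow_char_pow (R := K) (p := p) a b m
  -- q-th power is an involution
  have hqq : ∀ y : K, (y ^ q) ^ q = y := by
    intro y
    rw [← pow_mul]
    have : q * q = Fintype.card K := by rw [hK]; ring
    rw [this]
    exact FiniteField.pow_card y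
  have hpowcomm : ∀ (y : K) (k : ℕ), (y ^ k) ^ q = (y ^ q) ^ k := by
    intro y k
    rw [← pow_mul, mul_comm, pow_mul]
  -- compute γ ^ q
  have hγq : γ ^ q = c * (x * x ^ q - (x ^ q) ^ 2) := by
    rw [← hx, mul_pow, hsub, hcF, hpowcomm, hpowcomm, pow_succ, hqq]
  -- compute α ^ q
  have hαq : α ^ q = c * (γ * γ ^ q - (γ ^ q) ^ 2) := by
    rw [← hγ, mul_pow, hsub, hcF, hpowcomm, hpowcomm, pow_succ, hqq]
  have h2 : c * (γ ^ q * γ - γ ^ 2) = α := by rw [← pow_succ]; exact hγ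
  have hx2 : c * (x ^ q * x - x ^ 2) = γ := by rw [← pow_succ]; exact hx
  have k1 : c * (γ - γ ^ q) * (γ + γ ^ q) = 0 := by
    linear_combination -hαq - h2 + hαF
  rw [hγq, ← hx2] at k1
  have k2 : c ^ 3 * ((x ^ q - x) ^ 3 * (x + x ^ q)) = 0 := by
    linear_combination -k1
  have k3 : (x ^ q - x) ^ 3 * (x + x ^ q) = 0 :=
    (mul_eq_zero.mp k2).resolve_left (pow_ne_zero 3 hc0)
  rcases mul_eq_zero.mp k3 with h | h
  · -- x ^ q = x
    have hxx : x ^ q = x := by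
      have := pow_eq_zero_iff (n := 3) (by norm_num) |>.mp h
      exact sub_eq_zero.mp this
    have hγ0 : γ = 0 := by
      rw [hxx] at hx2
      linear_combination -hx2
    rw [hγ0, zero_pow (by omega : q + 1 ≠ 0)] at hγ
    apply hα0
    linear_combination -hγ
  · -- x ^ q = -x
    have hxx : x ^ q = -x := by linear_combination h
    rw [hxx] at hγq hx2
    have hgg : γ ^ q = γ := by linear_combination hγq + hx2
    apply hα0
    rw [hgg] at h2
    linear_combination -h2
end

section
/- Let q be an odd prime power, c ∈ F_q^*, and f(X) = c(X^{q+1} - X^2) on F_{q^2}. For every α ∈ F_{q^2} \ F_q, the preimage f^{-1}(α) has either 0 or 2 elements. -/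
/-- for α ∈ F_{q^2} \ F_q, the preimage f^{-1}(α) has 0 or 2 elements. -/
theorem stmt_4 (q : ℕ) (hq : Odd q) (K : Type*) [Field K] [Fintype K]
    (hK : Fintype.card K = q ^ 2)
    (c : K) (hcF : c ^ q = c) (hc0 : c ≠ 0)
    (α : K) (hα : α ^ q ≠ α) :
    Set.ncard {x : K | c * (x ^ (q + 1) - x ^ 2) = α} = 0 ∨
    Set.ncard {x : K | c * (x ^ (q + 1) - x ^ 2) = α} = 2 := by
  classical
  have hq0 : q ≠ 0 := by rintro rfl; exact (Nat.not_odd_iff_even.mpr Even.zero) hq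
  obtain ⟨p, hpc⟩ := CharP.exists K
  haveI := hpc
  have hppr : p.Prime := CharP.char_is_prime K p
  haveI : Fact p.Prime := ⟨hppr⟩
  obtain ⟨n, hnp, hn⟩ := FiniteField.card K p
  have hqdvd : q ∣ p ^ (n : ℕ) := by
    rw [← hn, hK]; exact dvd_pow_self q (by norm_num)
  obtain ⟨k, hk, hqk⟩ := (Nat.dvd_prime_pow hppr).mp hqdvd
  have hfrob : ∀ a b : K, (a - b) ^ q = a ^ q - b ^ q := by
    intro a b; rw [hqk]; exact sub_pow_char_pow a b k
  have hpow : ∀ x : K, (x ^ q) ^ q = x := by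
    intro x
    rw [← pow_mul, ← pow_two, ← hK, FiniteField.pow_card]
  have hα0 : α ≠ 0 := by
    rintro rfl; exact hα (zero_pow hq0)
  have hcardodd : Odd (Fintype.card K) := by rw [hK]; exact hq.pow
  have hp2 : p ≠ 2 := by
    rintro rfl
    rw [hn] at hcardodd
    exact (Nat.not_odd_iff_even.mpr (Nat.even_pow.mpr ⟨even_two, n.ne_zero⟩)) hcardodd
  have h2K : (2 : K) ≠ 0 := by
    intro h
    have h2 : ((2 : ℕ) : K) = 0 := by exact_mod_cast h
    have := (CharP.cast_eq_zero_iff K p 2).mp h2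
    exact hp2 ((Nat.prime_dvd_prime_iff_eq hppr Nat.prime_two).mp this)
  have key : ∀ x : K, c * (x ^ (q + 1) - x ^ 2) = α →
      c * (x * (x ^ q - x)) = α ∧ α + α ^ q = -(c * (x ^ q - x) ^ 2) := by
    intro x hx
    have h1 : c * (x * (x ^ q - x)) = α := by
      rw [← hx, pow_add, pow_one]; ring
    have h2 : α ^ q = -(c * (x ^ q * (x ^ q - x))) := by
      rw [← hx, mul_pow, hfrob, hcF, ← pow_mul, ← pow_mul]
      have e1 : x ^ ((q + 1) * q) = x * x ^ q := by
        rw [add_mul, one_mul, pow_add, pow_mul, hpow x]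
      have e2 : x ^ (2 * q) = (x ^ q) ^ 2 := by rw [mul_comm, pow_mul]
      rw [e1, e2]; ring
    refine ⟨h1, ?_⟩
    rw [h2, ← h1]; ring
  rcases Set.eq_empty_or_nonempty {x : K | c * (x ^ (q + 1) - x ^ 2) = α} with he | ⟨x, hx⟩
  · left; rw [he]; simp
  · right
    have hx' : c * (x ^ (q + 1) - x ^ 2) = α := hx
    obtain ⟨h1, h3⟩ := key x hx'
    have ht0 : x ^ q - x ≠ 0 := by
      intro h
      exact hα0 (by rw [← h1, h, mul_zero, mul_zero])
    have hx0 : x ≠ 0 := by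
      intro h
      exact hα0 (by rw [← h1, h, zero_mul, mul_zero])
    have hne : x ≠ -x := by
      intro h
      have h2x : (2 : K) * x = 0 := by linear_combination h
      rcases mul_eq_zero.mp h2x with h' | h'
      · exact h2K h'
      · exact hx0 h'
    have hSeq : {y : K | c * (y ^ (q + 1) - y ^ 2) = α} = {x, -x} := by
      ext y
      simp only [Set.mem_setOf_eq, Set.mem_insert_iff, Set.mem_singleton_iff]
      constructor
      · intro hy
        obtain ⟨g1, g3⟩ := key y hy
        have hsq : (x ^ q - x) ^ 2 = (y ^ q - y) ^ 2 := by
          have hh := h3.symm.trans g3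
          have : c * (x ^ q - x) ^ 2 = c * (y ^ q - y) ^ 2 := by linear_combination -hh
          exact mul_left_cancel₀ hc0 this
        have hfac : ((x ^ q - x) - (y ^ q - y)) * ((x ^ q - x) + (y ^ q - y)) = 0 := by
          linear_combination hsq
        rcases mul_eq_zero.mp hfac with h' | h'
        · -- y^q - y = x^q - x
          left
          have hst : y ^ q - y = x ^ q - x := by linear_combination -h'
          have : c * (x ^ q - x) * y = c * (x ^ q - x) * x := by
            rw [hst] at g1
            linear_combination g1 - h1
          exact mul_left_cancel₀ (mul_ne_zero hc0 ht0) this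
        · -- y^q - y = -(x^q - x)
          right
          have hst : y ^ q - y = -(x ^ q - x) := by linear_combination h'
          have : c * (x ^ q - x) * y = c * (x ^ q - x) * (-x) := by
            rw [hst] at g1
            linear_combination h1 - g1
          exact mul_left_cancel₀ (mul_ne_zero hc0 ht0) this
      · rintro (rfl | rfl)
        · exact hx'
        · rw [Even.neg_pow hq.add_one, neg_sq]
          exact hx'
    rw [hSeq]
    exact Set.ncard_pair hne
end

section
/- Let q be an odd prime power, c ∈ F_q^*, and f(X) = c(X^{q+1} - X^2) on F_{q^2}. Every periodic cycle of f of length greater than 1 has even length. -/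
/-- every cycle of f(X) = c(X^{q+1} - X^2) of length greater than 1
has even length. -/
theorem stmt_6 (q : ℕ) (hq : Odd q) (K : Type*) [Field K] [Fintype K]
    (hK : Fintype.card K = q ^ 2)
    (c : K) (hcF : c ^ q = c) (hc0 : c ≠ 0) :
    ∀ α : K,
      1 < Function.minimalPeriod (fun X : K => c * (X ^ (q + 1) - X ^ 2)) α →
      Even (Function.minimalPeriod (fun X : K => c * (X ^ (q + 1) - X ^ 2)) α) := by
  set f : K → K := fun X : K => c * (X ^ (q + 1) - X ^ 2) with hf
  -- q is a power of the characteristic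
  haveI : CharP K (ringChar K) := ringChar.charP K
  obtain ⟨m, hp, hcard⟩ := FiniteField.card K (ringChar K)
  haveI : Fact (ringChar K).Prime := ⟨hp⟩
  have hqdvd : q ∣ (ringChar K) ^ (m : ℕ) := by
    refine Dvd.intro (q) ?_
    rw [← hcard, hK]; ring
  obtain ⟨k, hk, hqpk⟩ := (Nat.dvd_prime_pow hp).1 hqdvd
  -- 2 ≠ 0 in K
  have h2 : (2 : K) ≠ 0 := by
    intro h2
    haveI : CharP K 2 := CharTwo.of_one_ne_zero_of_two_eq_zero one_ne_zero h2
    have hchar2 : ringChar K = 2 := ringChar.eq K 2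
    have := FiniteField.even_card_of_char_two (F := K) hchar2
    rw [hK] at this
    have hodd : Odd (q ^ 2) := hq.pow
    rw [Nat.odd_iff] at hodd
    omega
  -- the key identity : (f x)^q * x = -(x^q * f x)
  have hx2 : ∀ x : K, x ^ q ^ 2 = x := by
    intro x
    have := FiniteField.pow_card x
    rwa [hK] at this
  have key : ∀ x : K, (f x) ^ q * x = -(x ^ q * f x) := by
    intro x
    have hfrob : (x ^ (q + 1) - x ^ 2) ^ q = (x ^ (q + 1)) ^ q - (x ^ 2) ^ q := by
      rw [hqpk]
      exact sub_pow_char_pow (p := ringChar K) _ _ _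
    have h1 : (x ^ (q + 1)) ^ q = x * x ^ q := by
      rw [← pow_mul]
      have : (q + 1) * q = q ^ 2 + q := by ring
      rw [this, pow_add, hx2]
    have hfx : (f x) ^ q = c * (x * x ^ q - x ^ (2 * q)) := by
      rw [hf]
      simp only
      rw [mul_pow, hcF, hfrob, h1, ← pow_mul]
    rw [hfx, hf]
    simp only
    ring
  intro α hα
  rcases Nat.even_or_odd (Function.minimalPeriod f α) with he | ho
  · exact he
  exfalso
  set n := Function.minimalPeriod f α with hn
  have hnpos : 0 < n := by omega
  have hmem : α ∈ Function.periodicPts f :=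
    Function.minimalPeriod_pos_iff_mem_periodicPts.1 hnpos
  have hzero : f 0 = 0 := by
    rw [hf]; simp only
    rw [zero_pow (by omega : q + 1 ≠ 0), zero_pow (by norm_num : (2:ℕ) ≠ 0)]
    ring
  -- all iterates are nonzero
  have hne : ∀ j : ℕ, f^[j] α ≠ 0 := by
    intro j hj0
    have : Function.minimalPeriod f (f^[j] α) = n :=
      Function.minimalPeriod_apply_iterate hmem j
    rw [hj0] at this
    have : Function.minimalPeriod f (0 : K) = 1 :=
      Function.minimalPeriod_eq_one_iff_isFixedPt.2 hzero
    omega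
  -- the sign identity along the orbit
  have orbit : ∀ j : ℕ, (f^[j] α) ^ q * α = (-1 : K) ^ j * (α ^ q * f^[j] α) := by
    intro j
    induction j with
    | zero => simp
    | succ j ih =>
      have hstep := key (f^[j] α)
      rw [Function.iterate_succ_apply']
      apply mul_right_cancel₀ (hne j)
      calc (f (f^[j] α)) ^ q * α * f^[j] α
          = ((f (f^[j] α)) ^ q * f^[j] α) * α := by ring
        _ = (-((f^[j] α) ^ q * f (f^[j] α))) * α := by rw [hstep]
        _ = -(((f^[j] α) ^ q * α) * f (f^[j] α)) := by ring
        _ = -(((-1 : K) ^ j * (α ^ q * f^[j] α)) * f (f^[j] α)) := by rw [ih]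
        _ = (-1 : K) ^ (j + 1) * (α ^ q * f (f^[j] α)) * f^[j] α := by ring
  have hfin := orbit n
  rw [Function.iterate_minimalPeriod, ho.neg_one_pow] at hfin
  have : (2 : K) * (α ^ q * α) = 0 := by linear_combination hfin
  rcases mul_eq_zero.1 this with h | h
  · exact h2 h
  · rcases mul_eq_zero.1 h with h' | h'
    · exact hne 0 (by simpa using pow_eq_zero_iff hq.pos.ne' |>.1 h')
    · exact hne 0 (by simpa using h')
end

section
/- Let q be odd, β ∈ F_{q^2} with β^2 = b a nonsquare in F_q, c ∈ F_q^*, and f(X) = c(X^{q+1} - X^2). Writing g(x,y) = -8bc^3xy^2, for all x, y ∈ F_q and all n ≥ 1, f^{(2n)}(x + yβ) = g(x,y)^{(4^n - 1)/3} (x + yβ). -/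
/-- f^{(2n)}(x + yβ) = g(x,y)^{(4^n-1)/3} (x + yβ), with
g(x,y) = -8bc³xy², b = β². -/
theorem stmt_7 (q : ℕ) (hq : Odd q) (K : Type*) [Field K] [Fintype K]
    (hK : Fintype.card K = q ^ 2)
    (β : K) (hbF : (β ^ 2) ^ q = β ^ 2)
    (hbns : ¬ ∃ t : K, t ^ q = t ∧ t ^ 2 = β ^ 2)
    (c : K) (hcF : c ^ q = c) (hc0 : c ≠ 0)
    (x y : K) (hx : x ^ q = x) (hy : y ^ q = y) :
    ∀ n : ℕ, 1 ≤ n →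
      (fun X : K => c * (X ^ (q + 1) - X ^ 2))^[2 * n] (x + y * β) =
        (-8 * β ^ 2 * c ^ 3 * x * y ^ 2) ^ ((4 ^ n - 1) / 3) * (x + y * β) := by
  -- characteristic setup
  obtain ⟨p, hchar⟩ := CharP.exists K
  haveI := hchar
  haveI hp : Fact p.Prime := ⟨CharP.char_is_prime K p⟩
  obtain ⟨n0, hpp, hcard⟩ := FiniteField.card K p
  -- q is a power of p
  have hqdvd : q ∣ p ^ (n0 : ℕ) := by
    rw [← hcard, hK]
    exact dvd_pow_self q (by norm_num)
  obtain ⟨k, hk, hqp⟩ := (Nat.dvd_prime_pow hpp).mp hqdvd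
  -- additivity of the q-power map
  have hadd : ∀ a b : K, (a + b) ^ q = a ^ q + b ^ q := by
    intro a b
    rw [hqp]
    exact add_pow_char_pow a b p k
  -- β^q = -β
  have hβq : β ^ q = -β := by
    have h2 : (β ^ q) ^ 2 = β ^ 2 := by
      rw [← pow_mul, mul_comm, pow_mul, hbF]
    have hfac : (β ^ q - β) * (β ^ q + β) = 0 := by linear_combination h2
    rcases mul_eq_zero.mp hfac with h | h
    · exact absurd ⟨β, by rw [sub_eq_zero.mp h], rfl⟩ hbns
    · exact eq_neg_of_add_eq_zero_left h
  -- one application of f on elements written in the basis 1, β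
  have hf : ∀ X Y : K, X ^ q = X → Y ^ q = Y →
      c * ((X + Y * β) ^ (q + 1) - (X + Y * β) ^ 2) =
        (-2 * β ^ 2 * c * Y ^ 2) + (-2 * c * X * Y) * β := by
    intro X Y hX hY
    have hz : (X + Y * β) ^ q = X - Y * β := by
      rw [hadd, mul_pow, hX, hY, hβq]; ring
    rw [pow_succ, hz]; ring
  -- numerals are fixed by the q-power map
  have h2q : (2 : K) ^ q = 2 := by
    have := hadd 1 1
    norm_num at this
    linear_combination this
  have hneg : ∀ a : K, (-a) ^ q = -a ^ q := fun a => hq.neg_pow a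
  -- g is fixed by the q-power map
  set g : K := -8 * β ^ 2 * c ^ 3 * x * y ^ 2 with hg
  have hgq : g ^ q = g := by
    have h8 : (8 : K) ^ q = 8 := by
      have : ((2 : K) ^ 3) ^ q = (2 : K) ^ 3 := by
        rw [← pow_mul, mul_comm, pow_mul, h2q]
      norm_num at this
      convert this using 2 <;> norm_num
    calc g ^ q = (-8 : K) ^ q * (β ^ 2) ^ q * (c ^ q) ^ 3 * x ^ q * (y ^ q) ^ 2 := by
          rw [hg]; ring
      _ = g := by rw [hneg, h8, hbF, hcF, hx, hy, hg]
  -- divisibility : 3 ∣ 4^n - 1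
  have h3 : ∀ n : ℕ, 3 ∣ 4 ^ n - 1 := by
    intro n
    induction n with
    | zero => simp
    | succ m ih =>
      have h1 : 1 ≤ 4 ^ m := Nat.one_le_pow _ _ (by norm_num)
      have : 4 ^ (m + 1) - 1 = 4 * (4 ^ m - 1) + 3 := by omega
      rw [this]
      exact Nat.dvd_add (Dvd.dvd.mul_left ih 4) dvd_rfl
  -- main induction
  have main : ∀ n : ℕ,
      (fun X : K => c * (X ^ (q + 1) - X ^ 2))^[2 * n] (x + y * β) =
        g ^ ((4 ^ n - 1) / 3) * x + g ^ ((4 ^ n - 1) / 3) * y * β := by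
    intro n
    induction n with
    | zero => simp
    | succ m ih =>
      obtain ⟨t, ht⟩ := h3 m
      have h1 : 1 ≤ 4 ^ m := Nat.one_le_pow _ _ (by norm_num)
      have hm : (4 ^ m - 1) / 3 = t := by omega
      have hM : (4 ^ (m + 1) - 1) / 3 = 4 * t + 1 := by
        have : 4 ^ (m + 1) - 1 = 3 * (4 * t + 1) := by
          have : 4 ^ (m + 1) = 4 * 4 ^ m := by ring
          omega
        omega
      have hstep : 2 * (m + 1) = 2 + 2 * m := by ring
      rw [hstep, Function.iterate_add_apply, ih, hm, hM]
      set X : K := g ^ t * x with hX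
      set Y : K := g ^ t * y with hY
      have hXq : X ^ q = X := by rw [hX, mul_pow, ← pow_mul, mul_comm t q, pow_mul, hgq, hx]
      have hYq : Y ^ q = Y := by rw [hY, mul_pow, ← pow_mul, mul_comm t q, pow_mul, hgq, hy]
      have hgoal : X + Y * β = g ^ t * x + g ^ t * y * β := by rw [hX, hY]
      rw [← hgoal]
      show (fun X : K => c * (X ^ (q + 1) - X ^ 2))^[2] (X + Y * β) = _
      have e1 := hf X Y hXq hYq
      set X1 : K := -2 * β ^ 2 * c * Y ^ 2 with hX1
      set Y1 : K := -2 * c * X * Y with hY1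
      have hX1q : X1 ^ q = X1 := by
        rw [hX1]
        calc (-2 * β ^ 2 * c * Y ^ 2) ^ q
            = (-2 : K) ^ q * (β ^ 2) ^ q * c ^ q * (Y ^ q) ^ 2 := by ring
          _ = -2 * β ^ 2 * c * Y ^ 2 := by rw [hneg, h2q, hbF, hcF, hYq]
      have hY1q : Y1 ^ q = Y1 := by
        rw [hY1]
        calc (-2 * c * X * Y) ^ q = (-2 : K) ^ q * c ^ q * X ^ q * Y ^ q := by ring
          _ = -2 * c * X * Y := by rw [hneg, h2q, hcF, hXq, hYq]
      have e2 := hf X1 Y1 hX1q hY1q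
      have : (fun X : K => c * (X ^ (q + 1) - X ^ 2))^[2] (X + Y * β)
          = (-2 * β ^ 2 * c * Y1 ^ 2) + (-2 * c * X1 * Y1) * β := by
        show (fun X : K => c * (X ^ (q + 1) - X ^ 2))
            ((fun X : K => c * (X ^ (q + 1) - X ^ 2)) (X + Y * β)) = _
        simp only [e1, ← hX1, ← hY1]
        exact e2
      rw [this, hX1, hY1, hX, hY, hg]
      ring
  intro n _
  rw [main n, hg]
  ring
end

section
/- Let q be an odd prime power with q - 1 = 2^s r, r odd, c ∈ F_q^*, and f(X) = c(X^{q+1} - X^2) on F_{q^2}. For every odd divisor d of q-1, the number of periodic points of f lying on cycles of length 2·ord_{3d}(4) equals φ(d)(q-1) summed over those d with the same value of ord_{3d}(4); equivalently, the number of cycles of length 2·ord_{3d}(4) arising from d is φ(d)(q-1)/(2·ord_{3d}(4)). Moreover every cycle of length greater than 1 has length 2·ord_{3d}(4) for some odd divisor d of q-1. -/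
set_option linter.unusedSectionVars false

namespace Stmt8

variable {K : Type*} [Field K] {q : ℕ} {c : K}

/-- the map f -/
def ff (q : ℕ) (c : K) : K → K := fun X => c * (X ^ (q + 1) - X ^ 2)

/-- the semiconjugacy invariant -/
def zf (q : ℕ) (c : K) (x : K) : K := -c ^ 3 * (x ^ q - x) ^ 2 * (x ^ q + x)

/-- (4^k - 1)/3 -/
def ee : ℕ → ℕ
  | 0 => 0
  | k + 1 => 4 * ee k + 1

lemma ee_spec : ∀ k, 3 * ee k + 1 = 4 ^ k
  | 0 => rfl
  | k + 1 => by
    have := ee_spec k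
    simp only [ee, pow_succ]
    omega

section frob
variable (hfrob : ∀ x y : K, (x + y) ^ q = x ^ q + y ^ q) (hoq : Odd q)
    (hqq : ∀ x : K, (x ^ q) ^ q = x) (hc : c ^ q = c)

include hfrob hoq hqq hc

lemma sub_pow_q (x y : K) : (x - y) ^ q = x ^ q - y ^ q := by
  have h := hfrob x (-y)
  rw [hoq.neg_pow] at h
  simpa [sub_eq_add_neg] using h

lemma ymq (x : K) : (x ^ q - x) ^ q = -(x ^ q - x) := by
  rw [sub_pow_q hfrob hoq hqq hc, hqq]; ring

lemma ypq (x : K) : (x ^ q + x) ^ q = x ^ q + x := by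
  rw [hfrob, hqq]; ring

lemma cneg : (-c ^ 3 : K) ^ q = -c ^ 3 := by
  rw [hoq.neg_pow, ← pow_mul, mul_comm 3 q, pow_mul, hc]

lemma zf_pow_q (x : K) : zf q c x ^ q = zf q c x := by
  have : zf q c x ^ q =
      (-c ^ 3) ^ q * (((x ^ q - x) ^ q) ^ 2) * (x ^ q + x) ^ q := by
    rw [zf, mul_pow, mul_pow, ← pow_mul, mul_comm 2 q, pow_mul]
  rw [this, ymq hfrob hoq hqq hc, ypq hfrob hoq hqq hc, cneg hfrob hoq hqq hc, zf]
  ring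

lemma ff_ff (x : K) : ff q c (ff q c x) = zf q c x * x := by
  have hfx : ff q c x = c * x * (x ^ q - x) := by
    rw [ff, pow_succ]; ring
  have e1 : (x ^ (q + 1) : K) ^ q = x * x ^ q := by
    rw [← pow_mul, add_mul, one_mul, pow_add, mul_comm q q, pow_mul, hqq]
  have e2 : (x ^ 2 : K) ^ q = (x ^ q) ^ 2 := by
    rw [← pow_mul, mul_comm 2 q, pow_mul]
  have hfxq : (ff q c x) ^ q = c * x ^ q * (x - x ^ q) := by
    have h : (ff q c x) ^ q = c ^ q * ((x ^ (q + 1)) ^ q - (x ^ 2) ^ q) := by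
      rw [ff, mul_pow, sub_pow_q hfrob hoq hqq hc]
    rw [h, hc, e1, e2]; ring
  have h2 : ff q c (ff q c x) = c * (ff q c x) * ((ff q c x) ^ q - ff q c x) := by
    rw [ff, pow_succ]; ring
  rw [h2, hfxq, hfx, zf]; ring

lemma zf_mul {w : K} (hw : w ^ q = w) (x : K) : zf q c (w * x) = w ^ 3 * zf q c x := by
  have h1 : (w * x) ^ q = w * x ^ q := by rw [mul_pow, hw]
  rw [zf, zf, h1]; ring

lemma ff_mul {w : K} (hw : w ^ q = w) (x : K) : ff q c (w * x) = w ^ 2 * ff q c x := by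
  have h0 : (w * x) ^ q = w * x ^ q := by rw [mul_pow, hw]
  have h1 : (w * x) ^ (q + 1) = w ^ 2 * x ^ (q + 1) := by
    rw [pow_succ, h0, pow_succ]; ring
  rw [ff, ff, h1, mul_pow]; ring

lemma iter_even : ∀ (k : ℕ) (x : K), (ff q c)^[2 * k] x = (zf q c x) ^ (ee k) * x := by
  intro k
  induction k with
  | zero => intro x; simp [ee]
  | succ k ih =>
    intro x
    have h2 : 2 * (k + 1) = 2 * k + 2 := by ring
    rw [h2, Function.iterate_add_apply]
    have hf2 : (ff q c)^[2] x = zf q c x * x := by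
      simp only [Function.iterate_succ, Function.iterate_zero, Function.comp_apply, id]
      exact ff_ff hfrob hoq hqq hc x
    rw [hf2, ih, zf_mul hfrob hoq hqq hc (zf_pow_q hfrob hoq hqq hc x)]
    have h3 : ((zf q c x) ^ 3 * zf q c x) ^ ee k = ((zf q c x) ^ 4) ^ ee k := by
      ring_nf
    rw [h3, ← pow_mul, ee]
    ring

lemma iter_odd (k : ℕ) (x : K) :
    (ff q c)^[2 * k + 1] x = (zf q c x) ^ (2 * ee k) * ff q c x := by
  rw [add_comm, Function.iterate_add_apply]
  simp only [Function.iterate_one]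
  rw [iter_even hfrob hoq hqq hc]
  have hw : ((zf q c x) ^ (ee k)) ^ q = (zf q c x) ^ (ee k) := by
    rw [← pow_mul, mul_comm, pow_mul, zf_pow_q hfrob hoq hqq hc]
  rw [ff_mul hfrob hoq hqq hc hw, ← pow_mul, mul_comm (ee k) 2]

-- ZMod bridge
lemma dvd_ee_iff {d : ℕ} (hd : 0 < d) (k : ℕ) :
    d ∣ ee k ↔ (4 : ZMod (3 * d)) ^ k = 1 := by
  have h3 : d ∣ ee k ↔ 3 * d ∣ 3 * ee k := (Nat.mul_dvd_mul_iff_left (by norm_num : 0 < 3)).symm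
  have hcast : (4 : ZMod (3 * d)) ^ k = ((3 * ee k : ℕ) : ZMod (3 * d)) + 1 := by
    have : (4 : ZMod (3 * d)) ^ k = ((4 ^ k : ℕ) : ZMod (3 * d)) := by push_cast; ring
    rw [this, ← ee_spec k]; push_cast; ring
  have : NeZero (3 * d) := ⟨by omega⟩
  rw [h3, hcast]
  constructor
  · intro h
    rw [(ZMod.natCast_eq_zero_iff _ _).mpr h]; ring
  · intro h
    have : ((3 * ee k : ℕ) : ZMod (3 * d)) = 0 := by
      have := h; linear_combination this
    exact (ZMod.natCast_eq_zero_iff _ _).mp this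

lemma ord4_pos {d : ℕ} (hd : Odd d) (hdpos : 0 < d) : 0 < orderOf (4 : ZMod (3 * d)) := by
  have hodd : Odd (3 * d) := (by decide : Odd 3).mul hd
  have hcop2 : Nat.Coprime 2 (3 * d) :=
    (Nat.prime_two.coprime_iff_not_dvd).mpr (by have := Nat.odd_iff.mp hodd; omega)
  have hcop : Nat.Coprime 4 (3 * d) := by
    have := hcop2.pow_left 2
    norm_num at this
    exact this
  have heu : (4 : ZMod (3 * d)) ^ Nat.totient (3 * d) = 1 := by
    have h := Nat.ModEq.pow_totient hcop
    have := (ZMod.natCast_eq_natCast_iff _ _ (3 * d)).mpr h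
    push_cast at this
    exact this
  rw [orderOf_pos_iff]
  exact isOfFinOrder_iff_pow_eq_one.mpr ⟨Nat.totient (3 * d), Nat.totient_pos.mpr (by omega), heu⟩

end frob

lemma minper_good (hfrob : ∀ x y : K, (x + y) ^ q = x ^ q + y ^ q) (hoq : Odd q)
    (hqq : ∀ x : K, (x ^ q) ^ q = x) (hc : c ^ q = c) (hq1 : 2 ≤ q)
    (h2K : (2 : K) ≠ 0) (hc0 : c ≠ 0) {x : K}
    (hy : x ^ q - x ≠ 0) (hs : x ^ q + x ≠ 0) :
    (Odd (orderOf (zf q c x)) →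
      Function.minimalPeriod (ff q c) x = 2 * orderOf (4 : ZMod (3 * orderOf (zf q c x)))) ∧
    (¬ Odd (orderOf (zf q c x)) → Function.minimalPeriod (ff q c) x = 0) ∧
    orderOf (zf q c x) ∣ q - 1 ∧ 0 < orderOf (zf q c x) := by
  have hx : x ≠ 0 := by
    intro h; apply hs; rw [h, zero_pow (by omega : q ≠ 0), add_zero]
  have hz : zf q c x ≠ 0 := by
    rw [zf]
    exact mul_ne_zero (mul_ne_zero (neg_ne_zero.mpr (pow_ne_zero _ hc0)) (pow_ne_zero _ hy)) hs
  have hz1 : zf q c x ^ (q - 1) = 1 := by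
    have h := zf_pow_q hfrob hoq hqq hc x
    have h2 : zf q c x ^ (q - 1) * zf q c x = 1 * zf q c x := by
      rw [one_mul, ← pow_succ]
      have h3 : q - 1 + 1 = q := by omega
      rw [h3, h]
    exact mul_right_cancel₀ hz h2
  set d := orderOf (zf q c x) with hdd
  have hdpos : 0 < d := by
    rw [hdd, orderOf_pos_iff]
    exact isOfFinOrder_iff_pow_eq_one.mpr ⟨q - 1, by omega, hz1⟩
  have hddvd : d ∣ q - 1 := orderOf_dvd_of_pow_eq_one hz1
  have hper_even : ∀ k : ℕ, ((ff q c)^[2 * k] x = x ↔ d ∣ ee k) := by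
    intro k
    rw [iter_even hfrob hoq hqq hc, hdd, orderOf_dvd_iff_pow_eq_one]
    constructor
    · intro h
      have h2 : (zf q c x ^ ee k - 1) * x = 0 := by rw [sub_mul, one_mul, h, sub_self]
      rcases mul_eq_zero.mp h2 with h3 | h3
      · linear_combination h3
      · exact absurd h3 hx
    · intro h; rw [h, one_mul]
  have hnot_odd : ∀ k : ℕ, (ff q c)^[2 * k + 1] x ≠ x := by
    intro k hcon
    rw [iter_odd hfrob hoq hqq hc] at hcon
    have hfx : ff q c x = c * (x ^ q - x) * x := by rw [ff, pow_succ]; ring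
    rw [hfx] at hcon
    have hw : zf q c x ^ (2 * ee k) * (c * (x ^ q - x)) = 1 := by
      have h2 : (zf q c x ^ (2 * ee k) * (c * (x ^ q - x))) * x = 1 * x := by
        rw [one_mul]; linear_combination hcon
      exact mul_right_cancel₀ hx h2
    have hzq : (zf q c x ^ (2 * ee k)) ^ q = zf q c x ^ (2 * ee k) := by
      rw [← pow_mul, mul_comm, pow_mul, zf_pow_q hfrob hoq hqq hc]
    have hwq : (zf q c x ^ (2 * ee k) * (c * (x ^ q - x))) ^ q
        = -(zf q c x ^ (2 * ee k) * (c * (x ^ q - x))) := by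
      rw [mul_pow, mul_pow, hzq, hc, ymq hfrob hoq hqq hc]; ring
    rw [hw, one_pow] at hwq
    exact h2K (by linear_combination hwq)
  refine ⟨?_, ?_, hddvd, hdpos⟩
  · intro hd
    set n₀ := orderOf (4 : ZMod (3 * d)) with hn₀
    have hn₀pos : 0 < n₀ := ord4_pos hfrob hoq hqq hc hd hdpos
    have hper : Function.IsPeriodicPt (ff q c) (2 * n₀) x := by
      show (ff q c)^[2 * n₀] x = x
      rw [hper_even n₀, dvd_ee_iff hfrob hoq hqq hc hdpos]
      exact pow_orderOf_eq_one _
    have hdiv : ∀ m, 0 < m → Function.IsPeriodicPt (ff q c) m x → 2 * n₀ ∣ m := by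
      intro m hm hpm
      rcases Nat.even_or_odd m with he | ho
      · obtain ⟨k, hk⟩ := he
        have hk2 : m = 2 * k := by omega
        rw [hk2] at hpm
        have h1 : d ∣ ee k := (hper_even k).mp hpm
        have h2 : (4 : ZMod (3 * d)) ^ k = 1 := (dvd_ee_iff hfrob hoq hqq hc hdpos k).mp h1
        rw [hk2]
        exact Nat.mul_dvd_mul_left 2 (orderOf_dvd_of_pow_eq_one h2)
      · obtain ⟨k, hk⟩ := ho
        rw [hk] at hpm
        exact absurd hpm (hnot_odd k)
    have hmem : x ∈ Function.periodicPts (ff q c) :=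
      Function.mem_periodicPts.mpr ⟨2 * n₀, by omega, hper⟩
    exact Nat.dvd_antisymm (hper.minimalPeriod_dvd)
      (hdiv _ (Function.minimalPeriod_pos_of_mem_periodicPts hmem)
        (Function.isPeriodicPt_minimalPeriod _ _))
  · intro hd
    rw [Function.minimalPeriod_eq_zero_iff_notMem_periodicPts]
    intro hmem
    obtain ⟨m, hm, hpm⟩ := Function.mem_periodicPts.mp hmem
    rcases Nat.even_or_odd m with he | ho
    · obtain ⟨k, hk⟩ := he
      have hk2 : m = 2 * k := by omega
      rw [hk2] at hpm
      have h1 : d ∣ ee k := (hper_even k).mp hpm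
      have h2 : 2 ∣ d := (Nat.not_odd_iff_even.mp hd).two_dvd
      have h3 : 2 ∣ ee k := h2.trans h1
      have h4 : 3 * ee k + 1 = 4 ^ k := ee_spec k
      have hk0 : k ≠ 0 := by intro h; rw [h] at hk2; omega
      have h5 : (2 : ℕ) ∣ 4 ^ k := dvd_pow (by norm_num) hk0
      omega
    · obtain ⟨k, hk⟩ := ho
      rw [hk] at hpm
      exact absurd hpm (hnot_odd k)


open Polynomial in
lemma card_neg_frob [Fintype K] [DecidableEq K] (p j : ℕ) [Fact p.Prime] [CharP K p]
    (hqp : q = p ^ j) (hK : Fintype.card K = q ^ 2) (hq1 : 2 ≤ q) :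
    (Finset.univ.filter fun y : K => y ^ q = -y).card = q := by
  set g : K[X] := X ^ q + X with hg
  have hdX : (X : K[X]).degree < (X ^ q : K[X]).degree := by
    rw [degree_X_pow, degree_X]; exact_mod_cast (by omega : (1 : ℕ) < q)
  have hgm : g.Monic := monic_X_pow_add (by
    rw [degree_X]; exact_mod_cast (by omega : (1 : ℕ) < q))
  have hdeg : g.degree = (q : ℕ) := by
    rw [hg, degree_add_eq_left_of_degree_lt hdX, degree_X_pow]
  have hgd : g.natDegree = q := natDegree_eq_of_degree_eq_some hdeg
  set h : K[X] := g ^ (q - 1) - 1 with hh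
  have hhd : h.natDegree ≤ q * (q - 1) := by
    have h1 : (g ^ (q - 1)).natDegree = (q - 1) * q := by
      rw [hgm.natDegree_pow, hgd]
    have h2 : (1 : K[X]).natDegree = 0 := natDegree_one
    have h3 := natDegree_sub_le (g ^ (q - 1)) 1
    rw [h1, h2, max_eq_left (Nat.zero_le _), ← hh, mul_comm (q - 1) q] at h3
    exact h3
  -- the key factorization g * h = X^(q^2) - X
  have hgq : g ^ q = X ^ (q ^ 2) + X ^ q := by
    have h0 : ((X ^ q + X : K[X])) ^ (p ^ j) = (X ^ q) ^ (p ^ j) + X ^ (p ^ j) :=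
      add_pow_char_pow _ _ _ _
    rw [← hqp] at h0
    rw [hg, h0, ← pow_mul, ← pow_two]
  have hfact : g * h = X ^ (q ^ 2) - X := by
    have : g * h = g ^ (q - 1 + 1) - g := by rw [hh, pow_succ]; ring
    rw [this, (by omega : q - 1 + 1 = q), hgq, hg]; ring
  have hFne : (X ^ (q ^ 2) - X : K[X]) ≠ 0 := by
    have := FiniteField.X_pow_card_sub_X_ne_zero K (p := q ^ 2) (by nlinarith)
    exact this
  have hgh_ne : g * h ≠ 0 := by rw [hfact]; exact hFne
  have hroots : (X ^ (q ^ 2) - X : K[X]).roots = Finset.univ.val := by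
    rw [← hK]; exact FiniteField.roots_X_pow_card_sub_X K
  have hsum : g.roots + h.roots = Finset.univ.val := by
    rw [← roots_mul hgh_ne, hfact, hroots]
  have hcardF : Multiset.card (Finset.univ.val : Multiset K) = q ^ 2 := by
    rw [← hK]; rfl
  have hcg : Multiset.card g.roots ≤ q := by
    have := card_roots' g; omega
  have hch : Multiset.card h.roots ≤ q * (q - 1) := by
    have := card_roots' h; omega
  have hq2 : q + q * (q - 1) = q ^ 2 := by
    obtain ⟨m, rfl⟩ : ∃ m, q = m + 1 := ⟨q - 1, by omega⟩
    simp only [Nat.add_sub_cancel]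
    ring
  have hsumcard : Multiset.card g.roots + Multiset.card h.roots = q ^ 2 := by
    rw [← Multiset.card_add, hsum, hcardF]
  have hcgq : Multiset.card g.roots = q := by omega
  have hnodup : g.roots.Nodup := by
    have hle : g.roots ≤ Finset.univ.val := by
      rw [← hsum]; exact Multiset.le_add_right _ _
    exact Multiset.nodup_of_le hle Finset.univ.nodup
  have hset : (Finset.univ.filter fun y : K => y ^ q = -y) = g.roots.toFinset := by
    ext y
    simp only [Finset.mem_filter, Finset.mem_univ, true_and, Multiset.mem_toFinset]
    rw [mem_roots (hgm.ne_zero), IsRoot.def, hg]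
    simp only [eval_add, eval_pow, eval_X]
    constructor
    · intro hyy; rw [hyy]; ring
    · intro hyy; linear_combination hyy
  rw [hset, Multiset.toFinset_card_of_nodup hnodup, hcgq]

lemma card_orderOf_eq [Fintype K] [DecidableEq K]
    (hfrob : ∀ x y : K, (x + y) ^ q = x ^ q + y ^ q) (hoq : Odd q)
    (hqq : ∀ x : K, (x ^ q) ^ q = x) (hc : c ^ q = c) (hq1 : 2 ≤ q)
    (h2K : (2 : K) ≠ 0) (hc0 : c ≠ 0) (hK : Fintype.card K = q ^ 2)
    (hYm : (Finset.univ.filter fun y : K => y ^ q = -y).card = q)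
    (d : ℕ) (hd0 : 0 < d) (hdq : d ∣ q - 1) :
    (Finset.univ.filter fun x : K => orderOf (zf q c x) = d).card
      = Nat.totient d * (q - 1) := by
  have hw0 : ∀ w : K, orderOf w = d → w ≠ 0 := by
    intro w hw hcon
    have h1 := pow_orderOf_eq_one w
    rw [hw, hcon, zero_pow (by omega)] at h1
    exact zero_ne_one h1
  have hWq : ∀ w : K, orderOf w = d → w ^ q = w := by
    intro w hw
    have h1 : w ^ (q - 1) = 1 := orderOf_dvd_iff_pow_eq_one.mp (by rw [hw]; exact hdq)
    calc w ^ q = w ^ (q - 1 + 1) := by rw [(by omega : q - 1 + 1 = q)]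
      _ = w := by rw [pow_succ, h1, one_mul]
  -- number of elements of K of order d
  have hWcard : (Finset.univ.filter fun w : K => orderOf w = d).card = d.totient := by
    have hfactz : (q - 1) * (q + 1) = q ^ 2 - 1 := by
      obtain ⟨m, rfl⟩ : ∃ m, q = m + 2 := ⟨q - 2, by omega⟩
      have h1 : (m + 2) ^ 2 = m * m + 4 * m + 4 := by ring
      have h2 : (m + 1) * (m + 3) = m * m + 4 * m + 3 := by ring
      show (m + 1) * (m + 3) = (m + 2) ^ 2 - 1
      omega
    have hdvd : d ∣ Fintype.card Kˣ := by
      rw [Fintype.card_units, hK]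
      exact hdq.trans ⟨q + 1, hfactz.symm⟩
    have himg : (Finset.univ.filter fun w : K => orderOf w = d)
        = (Finset.univ.filter fun u : Kˣ => orderOf u = d).image (fun u : Kˣ => (u : K)) := by
      ext w
      simp only [Finset.mem_filter, Finset.mem_univ, true_and, Finset.mem_image]
      constructor
      · intro hw
        refine ⟨Units.mk0 w (hw0 w hw), ?_, rfl⟩
        rw [← Units.val_mk0 (a := w) (hw0 w hw)] at hw
        rw [orderOf_units] at hw
        exact hw
      · rintro ⟨u, hu, rfl⟩
        rw [orderOf_units]; exact hu
    rw [himg, Finset.card_image_of_injective _ Units.val_injective]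
    exact IsCyclic.card_orderOf_eq_totient hdvd
  set Ym' : Finset K := (Finset.univ.filter fun y : K => y ^ q = -y).erase 0 with hYm'
  have hYm'card : Ym'.card = q - 1 := by
    rw [hYm', Finset.card_erase_of_mem, hYm]
    simp only [Finset.mem_filter, Finset.mem_univ, true_and]
    rw [zero_pow (by omega : q ≠ 0), neg_zero]
  set A := Finset.univ.filter fun x : K => orderOf (zf q c x) = d with hA
  have hzne : ∀ x ∈ A, zf q c x ≠ 0 := by
    intro x hx
    rw [hA, Finset.mem_filter] at hx
    exact hw0 _ hx.2
  have hyne : ∀ x ∈ A, x ^ q - x ≠ 0 ∧ x ^ q + x ≠ 0 := by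
    intro x hx
    have h1 := hzne x hx
    rw [zf] at h1
    constructor
    · intro h; apply h1; rw [h]; ring
    · intro h; apply h1; rw [h]; ring
  have hmemf : ∀ x ∈ A, x ^ q - x ∈ Ym' := by
    intro x hx
    rw [hYm', Finset.mem_erase]
    refine ⟨(hyne x hx).1, ?_⟩
    simp only [Finset.mem_filter, Finset.mem_univ, true_and]
    exact ymq hfrob hoq hqq hc x
  rw [Finset.card_eq_sum_card_fiberwise hmemf]
  have hfib : ∀ y ∈ Ym', (A.filter fun x => x ^ q - x = y).card = d.totient := by
    intro y hy
    rw [hYm', Finset.mem_erase, Finset.mem_filter] at hy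
    obtain ⟨hy0, _, hyq⟩ := hy
    rw [← hWcard]
    apply Finset.card_bij (fun x _ => zf q c x)
    · intro x hx
      rw [Finset.mem_filter] at hx ⊢
      obtain ⟨hxA, _⟩ := hx
      rw [hA, Finset.mem_filter] at hxA
      exact ⟨Finset.mem_univ _, hxA.2⟩
    · intro x₁ hx₁ x₂ hx₂ hzeq
      rw [Finset.mem_filter] at hx₁ hx₂
      obtain ⟨hx₁A, hfib₁⟩ := hx₁
      obtain ⟨hx₂A, hfib₂⟩ := hx₂
      have hB : (-c ^ 3 * y ^ 2 : K) ≠ 0 :=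
        mul_ne_zero (neg_ne_zero.mpr (pow_ne_zero _ hc0)) (pow_ne_zero _ hy0)
      have hz1 : zf q c x₁ = -c ^ 3 * y ^ 2 * (x₁ ^ q + x₁) := by rw [zf, hfib₁]
      have hz2 : zf q c x₂ = -c ^ 3 * y ^ 2 * (x₂ ^ q + x₂) := by rw [zf, hfib₂]
      rw [hz1, hz2] at hzeq
      have hseq : x₁ ^ q + x₁ = x₂ ^ q + x₂ := mul_left_cancel₀ hB hzeq
      have h2x : (2 : K) * x₁ = (2 : K) * x₂ := by
        linear_combination hseq - hfib₁ + hfib₂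
      exact mul_left_cancel₀ h2K h2x
    · intro w hw
      rw [Finset.mem_filter] at hw
      obtain ⟨_, hword⟩ := hw
      have hwne := hw0 w hword
      have hwq := hWq w hword
      set B : K := -c ^ 3 * y ^ 2 with hB
      have hBne : B ≠ 0 :=
        mul_ne_zero (neg_ne_zero.mpr (pow_ne_zero _ hc0)) (pow_ne_zero _ hy0)
      have hBq : B ^ q = B := by
        rw [hB, mul_pow, cneg hfrob hoq hqq hc, ← pow_mul, mul_comm 2 q, pow_mul, hyq]
        ring
      set s : K := w * B⁻¹ with hs
      have hsq : s ^ q = s := by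
        rw [hs, mul_pow, hwq, inv_pow, hBq]
      have h2q : (2 : K) ^ q = 2 := by
        rw [← one_add_one_eq_two, hfrob]; norm_num
      set x : K := (s - y) * (2 : K)⁻¹ with hx
      have hxq : x ^ q = (s + y) * (2 : K)⁻¹ := by
        rw [hx, mul_pow, sub_pow_q hfrob hoq hqq hc, hsq, hyq, inv_pow, h2q]
        ring
      have hyfib : x ^ q - x = y := by
        rw [hxq, hx]
        field_simp
        ring
      have hxs : x ^ q + x = s := by
        rw [hxq, hx]
        field_simp
        ring
      have hzx : zf q c x = w := by
        rw [zf, hyfib, hxs, ← hB, hs]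
        field_simp
      refine ⟨x, ?_, hzx⟩
      rw [Finset.mem_filter, hA, Finset.mem_filter]
      exact ⟨⟨Finset.mem_univ _, by rw [hzx, hword]⟩, hyfib⟩
  rw [Finset.sum_congr rfl hfib, Finset.sum_const, hYm'card, smul_eq_mul, mul_comm]


lemma minper_degen (hfrob : ∀ x y : K, (x + y) ^ q = x ^ q + y ^ q) (hoq : Odd q)
    (hqq : ∀ x : K, (x ^ q) ^ q = x) (hc : c ^ q = c) (hq1 : 2 ≤ q)
    (h2K : (2 : K) ≠ 0) {x : K} (h : x ^ q - x = 0 ∨ x ^ q + x = 0) :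
    Function.minimalPeriod (ff q c) x ≤ 1 := by
  have hf0 : ff q c 0 = 0 := by
    show c * ((0 : K) ^ (q + 1) - 0 ^ 2) = 0
    rw [zero_pow (by omega : q + 1 ≠ 0), zero_pow (by omega : (2 : ℕ) ≠ 0)]
    ring
  have hfix : ∀ a : K, a ^ q = a → ff q c a = 0 := by
    intro a ha
    show c * (a ^ (q + 1) - a ^ 2) = 0
    rw [pow_succ, ha]; ring
  have hfixed_le : ∀ a : K, ff q c a = a → Function.minimalPeriod (ff q c) a ≤ 1 := by
    intro a ha
    have hper : Function.IsPeriodicPt (ff q c) 1 a := by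
      show (ff q c)^[1] a = a; simpa using ha
    exact Nat.le_of_dvd one_pos hper.minimalPeriod_dvd
  by_cases hx0 : x = 0
  · subst hx0; exact hfixed_le 0 hf0
  rcases h with hE | hE
  · have hxq : x ^ q = x := by linear_combination hE
    have hfx := hfix x hxq
    have : Function.minimalPeriod (ff q c) x = 0 := by
      rw [Function.minimalPeriod_eq_zero_iff_notMem_periodicPts]
      intro hmem
      obtain ⟨m, hm, hpm⟩ := Function.mem_periodicPts.mp hmem
      obtain ⟨k, rfl⟩ : ∃ k, m = k + 1 := ⟨m - 1, by omega⟩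
      have hpm' : (ff q c)^[k + 1] x = x := hpm
      rw [Function.iterate_succ_apply, hfx, Function.iterate_fixed hf0] at hpm'
      exact hx0 hpm'.symm
    omega
  · have hxq : x ^ q = -x := by linear_combination hE
    have h2q : (2 : K) ^ q = 2 := by
      rw [← one_add_one_eq_two, hfrob]; norm_num
    have hwval : ff q c x = -(2 : K) * c * x ^ 2 := by
      show c * (x ^ (q + 1) - x ^ 2) = _
      rw [pow_succ, hxq]; ring
    have hwq : (ff q c x) ^ q = ff q c x := by
      rw [hwval, mul_pow, mul_pow, hoq.neg_pow, h2q, hc, ← pow_mul, mul_comm 2 q,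
        pow_mul, hxq]
      ring
    have hffx : ff q c (ff q c x) = 0 := hfix _ hwq
    have : Function.minimalPeriod (ff q c) x = 0 := by
      rw [Function.minimalPeriod_eq_zero_iff_notMem_periodicPts]
      intro hmem
      obtain ⟨m, hm, hpm⟩ := Function.mem_periodicPts.mp hmem
      rcases (by omega : m = 1 ∨ 2 ≤ m) with h1 | h2
      · subst h1
        have hpm' : ff q c x = x := hpm
        have hx2 : x ^ q = x := by rw [← hpm', hwq, hpm']
        have : (2 : K) * x = 0 := by linear_combination hxq - hx2
        rcases mul_eq_zero.mp this with hh | hh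
        · exact h2K hh
        · exact hx0 hh
      · obtain ⟨k, rfl⟩ : ∃ k, m = k + 2 := ⟨m - 2, by omega⟩
        have hpm' : (ff q c)^[k + 2] x = x := hpm
        rw [Function.iterate_add_apply (ff q c) k 2] at hpm'
        have h22 : (ff q c)^[2] x = 0 := by
          rw [Function.iterate_succ_apply, Function.iterate_succ_apply,
            Function.iterate_zero_apply]
          exact hffx
        rw [h22, Function.iterate_fixed hf0] at hpm'
        exact hx0 hpm'.symm
    omega

end Stmt8

open scoped Classical in
/-- cycle structure of f(X) = c(X^{q+1} - X^2): for each n ≥ 1 the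
points of exact period 2n are counted by φ(d)(q-1) summed over odd divisors d of
q - 1 with ord_{3d}(4) = n, and every cycle length greater than 1 is of the form
2·ord_{3d}(4) for some odd divisor d of q - 1. -/
theorem stmt_8 (q s r : ℕ) (hq : Odd q) (hsr : q - 1 = 2 ^ s * r) (hr : Odd r)
    (K : Type*) [Field K] [Fintype K] (hK : Fintype.card K = q ^ 2)
    (c : K) (hcF : c ^ q = c) (hc0 : c ≠ 0) :
    (∀ n : ℕ, 1 ≤ n →
      Set.ncard {α : K |
          Function.minimalPeriod (fun X : K => c * (X ^ (q + 1) - X ^ 2)) α = 2 * n} =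
        ∑ d ∈ (q - 1).divisors.filter
            (fun d => Odd d ∧ orderOf ((4 : ZMod (3 * d))) = n),
          Nat.totient d * (q - 1)) ∧
    (∀ α : K,
      1 < Function.minimalPeriod (fun X : K => c * (X ^ (q + 1) - X ^ 2)) α →
      ∃ d : ℕ, d ∣ q - 1 ∧ Odd d ∧
        Function.minimalPeriod (fun X : K => c * (X ^ (q + 1) - X ^ 2)) α =
          2 * orderOf ((4 : ZMod (3 * d)))) := by
  classical
  -- basic numeric facts
  have hr1 : 1 ≤ r := by
    rcases hr with ⟨u, hu⟩; omega
  have h2s : 1 ≤ 2 ^ s := Nat.one_le_two_pow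
  have hq3 : 3 ≤ q := by
    rcases hq with ⟨t, ht⟩
    have : 1 ≤ 2 ^ s * r := Nat.mul_le_mul h2s hr1
    omega
  have hq1 : 2 ≤ q := by omega
  -- characteristic
  set p := ringChar K with hpdef
  haveI : CharP K p := ringChar.charP K
  obtain ⟨n0, hp, hcard⟩ := FiniteField.card K p
  haveI : Fact p.Prime := ⟨hp⟩
  have hqdvd : q ∣ p ^ (n0 : ℕ) := by
    rw [← hcard, hK]
    exact dvd_pow_self q two_ne_zero
  obtain ⟨j, hjn, hqpj⟩ := (Nat.dvd_prime_pow hp).mp hqdvd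
  have hj0 : j ≠ 0 := by
    intro h; rw [h, pow_zero] at hqpj; omega
  have hpodd : p ≠ 2 := by
    intro h
    have h2q : 2 ∣ q := by rw [hqpj, h]; exact dvd_pow_self 2 hj0
    rcases hq with ⟨t, ht⟩; omega
  have hfrob : ∀ x y : K, (x + y) ^ q = x ^ q + y ^ q := by
    intro x y; rw [hqpj]; exact add_pow_char_pow x y p j
  have hqq : ∀ x : K, (x ^ q) ^ q = x := by
    intro x
    rw [← pow_mul, ← pow_two, ← hK]
    exact FiniteField.pow_card x
  have h2K : (2 : K) ≠ 0 := by
    intro h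
    have h2 : ((2 : ℕ) : K) = 0 := by exact_mod_cast h
    have h3 : p ∣ 2 := (CharP.cast_eq_zero_iff K p 2).mp h2
    exact hpodd ((Nat.prime_dvd_prime_iff_eq hp Nat.prime_two).mp h3)
  have hq10 : q - 1 ≠ 0 := by omega
  have hYm := Stmt8.card_neg_frob (q := q) p j hqpj hK hq1
  have hcnt := fun (d : ℕ) (hd0 : 0 < d) (hdq : d ∣ q - 1) =>
    Stmt8.card_orderOf_eq (c := c) hfrob hq hqq hcF hq1 h2K hc0 hK hYm d hd0 hdq
  have hFF : (fun X : K => c * (X ^ (q + 1) - X ^ 2)) = Stmt8.ff q c := rfl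
  -- good/degenerate dichotomy helpers
  have hzsplit : ∀ α : K, ¬(α ^ q - α = 0 ∨ α ^ q + α = 0) →
      (Odd (orderOf (Stmt8.zf q c α)) →
        Function.minimalPeriod (Stmt8.ff q c) α
          = 2 * orderOf (4 : ZMod (3 * orderOf (Stmt8.zf q c α)))) ∧
      (¬Odd (orderOf (Stmt8.zf q c α)) →
        Function.minimalPeriod (Stmt8.ff q c) α = 0) ∧
      orderOf (Stmt8.zf q c α) ∣ q - 1 ∧ 0 < orderOf (Stmt8.zf q c α) := by
    intro α hα
    push_neg at hα
    exact Stmt8.minper_good hfrob hq hqq hcF hq1 h2K hc0 hα.1 hα.2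
  constructor
  · -- part 1
    intro n hn
    rw [hFF]
    set D : Finset ℕ := (q - 1).divisors.filter
      (fun d => Odd d ∧ orderOf ((4 : ZMod (3 * d))) = n) with hD
    set A : ℕ → Finset K := fun d => Finset.univ.filter
      (fun x : K => orderOf (Stmt8.zf q c x) = d) with hA
    have hseteq : {α : K | Function.minimalPeriod (Stmt8.ff q c) α = 2 * n}
        = ↑(D.biUnion A) := by
      ext α
      simp only [Set.mem_setOf_eq, Finset.coe_biUnion, Set.mem_iUnion, Finset.mem_coe,
        hA, hD, Finset.mem_filter, Finset.mem_univ, true_and, Nat.mem_divisors]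
      constructor
      · intro hmp
        by_cases hdeg : α ^ q - α = 0 ∨ α ^ q + α = 0
        · have := Stmt8.minper_degen hfrob hq hqq hcF hq1 h2K hdeg
          omega
        · obtain ⟨hodd_case, heven_case, hddvd, hdpos⟩ := hzsplit α hdeg
          by_cases hodd : Odd (orderOf (Stmt8.zf q c α))
          · refine ⟨orderOf (Stmt8.zf q c α), ⟨⟨hddvd, hq10⟩, hodd, ?_⟩, rfl⟩
            have := hodd_case hodd
            omega
          · have := heven_case hodd
            omega
      · rintro ⟨d, ⟨⟨hddvd, -⟩, hodd, hord4⟩, hdord⟩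
        have hd0 : 0 < d := by
          rcases hodd with ⟨u, hu⟩; omega
        have hzne : Stmt8.zf q c α ≠ 0 := by
          intro hcon
          have h1 := pow_orderOf_eq_one (Stmt8.zf q c α)
          rw [hdord, hcon, zero_pow (by omega)] at h1
          exact zero_ne_one h1
        have hdeg : ¬(α ^ q - α = 0 ∨ α ^ q + α = 0) := by
          rintro (h | h) <;> (apply hzne; rw [Stmt8.zf, h]; ring)
        obtain ⟨hodd_case, -, -, -⟩ := hzsplit α hdeg
        rw [hodd_case (by rw [hdord]; exact hodd), hdord, hord4]
    rw [hseteq, Set.ncard_coe_finset]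
    have hdisj : ∀ d1 ∈ D, ∀ d2 ∈ D, d1 ≠ d2 → Disjoint (A d1) (A d2) := by
      intro d1 _ d2 _ hne
      rw [Finset.disjoint_left]
      intro a ha1 ha2
      rw [hA, Finset.mem_filter] at ha1 ha2
      exact hne (ha1.2.symm.trans ha2.2)
    rw [Finset.card_biUnion hdisj]
    refine Finset.sum_congr rfl ?_
    intro d hd
    rw [hD, Finset.mem_filter, Nat.mem_divisors] at hd
    exact hcnt d (Nat.pos_of_dvd_of_pos hd.1.1 (by omega)) hd.1.1
  · -- part 2
    intro α hmp
    rw [hFF] at hmp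
    by_cases hdeg : α ^ q - α = 0 ∨ α ^ q + α = 0
    · have := Stmt8.minper_degen hfrob hq hqq hcF hq1 h2K hdeg
      omega
    · obtain ⟨hodd_case, heven_case, hddvd, hdpos⟩ := hzsplit α hdeg
      by_cases hodd : Odd (orderOf (Stmt8.zf q c α))
      · exact ⟨orderOf (Stmt8.zf q c α), hddvd, hodd, by rw [hFF]; exact hodd_case hodd⟩
      · have := heven_case hodd
        omega
end

section
/- Let q be an odd prime power, c ∈ F_q^*, and f(X) = c(X^{q+1} - X^2) on F_{q^2}. Then f has exactly (q-1)/2 cycles of length 2, i.e., exactly q-1 points of exact period 2. -/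
open Polynomial

lemma ncard_setOf_root_le {K : Type*} [Field K] (P : Polynomial K) (hP : P ≠ 0) :
    {x : K | P.eval x = 0}.ncard ≤ P.natDegree := by
  classical
  have hset : {x : K | P.eval x = 0} = ↑P.roots.toFinset := by
    ext x
    simp [Polynomial.mem_roots, hP, Polynomial.IsRoot]
  rw [hset, Set.ncard_coe_finset]
  exact le_trans (P.roots.toFinset_card_le) (P.card_roots')

lemma aux_count {K : Type*} [Field K] [Fintype K] (q : ℕ) (hq1 : 1 < q)
    (hcard : Fintype.card K = q ^ 2)
    (hfrob : ∀ x y : K, (x + y) ^ q = x ^ q + y ^ q)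
    (hpow2 : ∀ x : K, (x ^ q) ^ q = x) :
    {u : K | u ^ q + u = 0}.ncard = q := by
  classical
  let g : K →+ K := AddMonoidHom.mk' (fun x => x ^ q + x)
    (fun x y => by rw [hfrob]; ring)
  have hgapply : ∀ x : K, g x = x ^ q + x := fun _ => rfl
  -- degree facts
  have hne1q : ¬(1 = q) := by omega
  have hdeg1 : (X ^ q + X : K[X]).natDegree = q := by
    compute_degree
    · rw [if_neg hne1q]; norm_num
    · omega
  have hdeg2 : (X ^ q - X : K[X]).natDegree = q := by
    compute_degree
    · rw [if_neg hne1q]; norm_num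
    · omega
  have h1ne : (X ^ q + X : K[X]) ≠ 0 := by
    intro h; rw [h] at hdeg1; simp at hdeg1; omega
  have h2ne : (X ^ q - X : K[X]) ≠ 0 := by
    intro h; rw [h] at hdeg2; simp at hdeg2; omega
  -- kernel as a set
  have hkerset : (g.ker : Set K) = {u : K | u ^ q + u = 0} := by
    ext u
    simp [AddMonoidHom.mem_ker, hgapply]
  have hcoe_ker : Nat.card g.ker = (g.ker : Set K).ncard := (Nat.card_coe_set_eq _).symm
  have hcoe_range : Nat.card g.range = (g.range : Set K).ncard := (Nat.card_coe_set_eq _).symm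
  -- kernel bound
  have hker_le : Nat.card g.ker ≤ q := by
    rw [hcoe_ker, hkerset]
    have hseteq : {u : K | u ^ q + u = 0} = {x : K | (X ^ q + X : K[X]).eval x = 0} := by
      ext x; simp
    rw [hseteq]
    calc {x : K | (X ^ q + X : K[X]).eval x = 0}.ncard ≤ (X ^ q + X : K[X]).natDegree :=
          ncard_setOf_root_le _ h1ne
      _ = q := hdeg1
  -- range bound
  have hrange_le : Nat.card g.range ≤ q := by
    rw [hcoe_range]
    have hsub : (g.range : Set K) ⊆ {x : K | (X ^ q - X : K[X]).eval x = 0} := by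
      rintro y hy
      obtain ⟨x, rfl⟩ := hy
      simp only [Set.mem_setOf_eq, eval_sub, eval_pow, eval_X]
      have : (g x) ^ q = g x := by
        rw [hgapply, hfrob, hpow2]; ring
      rw [sub_eq_zero]; exact this
    calc (g.range : Set K).ncard ≤ {x : K | (X ^ q - X : K[X]).eval x = 0}.ncard :=
          Set.ncard_le_ncard hsub (Set.toFinite _)
      _ ≤ (X ^ q - X : K[X]).natDegree := ncard_setOf_root_le _ h2ne
      _ = q := hdeg2
  -- first isomorphism theorem counting
  have hprod : Nat.card (K ⧸ g.ker) * Nat.card g.ker = q ^ 2 := by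
    rw [← AddSubgroup.card_eq_card_quotient_mul_card_addSubgroup, Nat.card_eq_fintype_card, hcard]
  have hquot : Nat.card (K ⧸ g.ker) = Nat.card g.range :=
    Nat.card_congr (QuotientAddGroup.quotientKerEquivRange g).toEquiv
  have h0q : 0 < q := by omega
  have h1 : q ^ 2 ≤ q * Nat.card g.ker := by
    rw [← hprod, hquot]
    exact Nat.mul_le_mul_right _ hrange_le
  have h2 : q ≤ Nat.card g.ker := by
    rw [pow_two] at h1
    exact Nat.le_of_mul_le_mul_left h1 h0q
  have hkq : Nat.card g.ker = q := le_antisymm hker_le h2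
  rw [← hkerset, ← hcoe_ker, hkq]

/-- f(X) = c(X^{q+1} - X^2) has exactly (q-1)/2 cycles of length 2,
i.e. exactly q - 1 points of exact period 2. -/
theorem stmt_9 (q : ℕ) (hq : Odd q) (K : Type*) [Field K] [Fintype K]
    (hK : Fintype.card K = q ^ 2)
    (c : K) (hcF : c ^ q = c) (hc0 : c ≠ 0) :
    Set.ncard {α : K |
        c * ((c * (α ^ (q + 1) - α ^ 2)) ^ (q + 1) - (c * (α ^ (q + 1) - α ^ 2)) ^ 2) = α ∧
        c * (α ^ (q + 1) - α ^ 2) ≠ α} = q - 1 := by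
  classical
  have hq0 : q ≠ 0 := by rintro rfl; simp [Nat.odd_iff] at hq
  have hq1 : 1 < q := by
    rcases Nat.lt_or_ge q 2 with h | h
    · interval_cases q
      · exact absurd hq (by decide)
      · exfalso
        have h1 : Fintype.card K = 1 := by simpa using hK
        have h2 := Fintype.one_lt_card (α := K)
        omega
    · omega
  -- characteristic facts
  obtain ⟨p, hpc⟩ := CharP.exists K
  haveI := hpc
  have hp : p.Prime := CharP.char_is_prime K p
  haveI : Fact p.Prime := ⟨hp⟩
  obtain ⟨n, -, hcard⟩ := FiniteField.card K p
  have hq2 : q ^ 2 = p ^ (n : ℕ) := by rw [← hK, hcard]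
  obtain ⟨j, -, hj⟩ : ∃ k ≤ (n : ℕ), q = p ^ k :=
    (Nat.dvd_prime_pow hp).mp (by rw [← hq2]; exact dvd_pow_self q two_ne_zero)
  have hpdvd : p ∣ q := by
    rcases j with _ | j
    · exfalso; rw [hj] at hq1; simp at hq1
    · rw [hj]; exact dvd_pow_self p (Nat.succ_ne_zero j)
  have hpodd : p ≠ 2 := by
    intro h
    rw [h] at hpdvd
    rw [Nat.odd_iff] at hq
    omega
  have h2K : (2 : K) ≠ 0 := by
    intro h
    have h2 : ((2 : ℕ) : K) = 0 := by exact_mod_cast h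
    have := (CharP.cast_eq_zero_iff K p 2).mp h2
    have := (Nat.prime_dvd_prime_iff_eq hp Nat.prime_two).mp this
    exact hpodd this
  -- Frobenius-type identities
  have hfrob : ∀ x y : K, (x + y) ^ q = x ^ q + y ^ q := by
    intro x y; rw [hj]; exact add_pow_char_pow x y p j
  have hpow2 : ∀ x : K, (x ^ q) ^ q = x := by
    intro x
    have h := FiniteField.pow_card x
    rw [hK, pow_two, pow_mul] at h
    exact h
  have hneg : ∀ x : K, (-x) ^ q = -(x ^ q) := fun x => Odd.neg_pow hq x
  have hsub : ∀ x y : K, (x - y) ^ q = x ^ q - y ^ q := by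
    intro x y
    rw [sub_eq_add_neg, hfrob, hneg, ← sub_eq_add_neg]
  have huq : ∀ α : K, (α ^ q - α) ^ q = -(α ^ q - α) := by
    intro α; rw [hsub, hpow2]; ring
  have h2q : (2 : K) ^ q = 2 := by
    have h := hfrob 1 1
    norm_num at h
    exact h
  -- characterization of the period-2 set
  have hSchar : {α : K |
        c * ((c * (α ^ (q + 1) - α ^ 2)) ^ (q + 1) - (c * (α ^ (q + 1) - α ^ 2)) ^ 2) = α ∧
        c * (α ^ (q + 1) - α ^ 2) ≠ α}
      = {α : K | c ^ 3 * (α ^ q - α) ^ 2 * (α ^ q + α) = -1} := by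
    ext α
    simp only [Set.mem_setOf_eq]
    have hβ : c * (α ^ (q + 1) - α ^ 2) = c * α * (α ^ q - α) := by
      rw [pow_succ]; ring
    have hβq : (c * α * (α ^ q - α)) ^ q = -(c * α ^ q * (α ^ q - α)) := by
      rw [mul_pow, mul_pow, hcF, huq]; ring
    have hfb : c * ((c * α * (α ^ q - α)) ^ (q + 1) - (c * α * (α ^ q - α)) ^ 2)
        = -(c ^ 3 * (α ^ q - α) ^ 2 * (α ^ q + α)) * α := by
      rw [pow_succ, hβq]; ring
    rw [hβ, hfb]
    constructor
    · rintro ⟨h1, h2⟩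
      have hα0 : α ≠ 0 := by rintro rfl; apply h2; ring
      have h3 : (c ^ 3 * (α ^ q - α) ^ 2 * (α ^ q + α) + 1) * α = 0 := by
        linear_combination -h1
      rcases mul_eq_zero.mp h3 with h | h
      · linear_combination h
      · exact absurd h hα0
    · intro hE
      have hu0 : (α ^ q - α) ≠ 0 := by
        intro h; rw [h] at hE; simp at hE
      have hα0 : α ≠ 0 := by
        intro h
        apply hu0
        rw [h, zero_pow hq0, sub_zero]
      refine ⟨by rw [hE]; ring, ?_⟩
      intro hfix
      have hcu : c * (α ^ q - α) = 1 := by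
        have h4 : (c * (α ^ q - α) - 1) * α = 0 := by linear_combination hfix
        rcases mul_eq_zero.mp h4 with h | h
        · linear_combination h
        · exact absurd h hα0
      have h5 : c * (α ^ q - α) ^ q = 1 := by
        calc c * (α ^ q - α) ^ q = (c * (α ^ q - α)) ^ q := by rw [mul_pow, hcF]
          _ = 1 := by rw [hcu, one_pow]
      rw [huq] at h5
      have h6 : c * ((2 : K) * (α ^ q - α)) = 0 := by linear_combination hcu - h5
      rcases mul_eq_zero.mp ((mul_eq_zero.mp h6).resolve_left hc0) with h | h
      · exact h2K h
      · exact hu0 h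
  -- injectivity of α ↦ α^q - α on the characterized set
  have hinj : Set.InjOn (fun α : K => α ^ q - α)
      {α : K | c ^ 3 * (α ^ q - α) ^ 2 * (α ^ q + α) = -1} := by
    rintro a ha b hb hab
    simp only [Set.mem_setOf_eq] at ha hb
    simp only at hab
    have hu0 : a ^ q - a ≠ 0 := by intro h; rw [h] at ha; simp at ha
    have hb' : c ^ 3 * (a ^ q - a) ^ 2 * (b ^ q + b) = -1 := by rw [hab]; exact hb
    have hmul : c ^ 3 * (a ^ q - a) ^ 2 ≠ 0 :=
      mul_ne_zero (pow_ne_zero _ hc0) (pow_ne_zero _ hu0)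
    have hsum : a ^ q + a = b ^ q + b := mul_left_cancel₀ hmul (ha.trans hb'.symm)
    have h2a : (2 : K) * a = 2 * b := by linear_combination hsum - hab
    exact mul_left_cancel₀ h2K h2a
  -- image of the characterized set
  have himg : (fun α : K => α ^ q - α) '' {α : K | c ^ 3 * (α ^ q - α) ^ 2 * (α ^ q + α) = -1}
      = {u : K | u ^ q = -u ∧ u ≠ 0} := by
    ext u
    constructor
    · rintro ⟨a, ha, rfl⟩
      simp only [Set.mem_setOf_eq] at ha ⊢
      refine ⟨huq a, ?_⟩
      intro h; rw [h] at ha; simp at ha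
    · rintro ⟨hu1, hu2⟩
      have hcu3 : c ^ 3 * u ^ 2 ≠ 0 := mul_ne_zero (pow_ne_zero _ hc0) (pow_ne_zero _ hu2)
      set t : K := -(c ^ 3 * u ^ 2)⁻¹ with ht_def
      have hcuq : (c ^ 3 * u ^ 2) ^ q = c ^ 3 * u ^ 2 := by
        have h := mul_pow (c ^ 3) (u ^ 2) q
        rw [← pow_mul, ← pow_mul, mul_comm 3 q, mul_comm 2 q, pow_mul, pow_mul, hcF, hu1] at h
        rw [h]; ring
      have htq : t ^ q = t := by
        rw [ht_def, hneg, inv_pow, hcuq]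
      have hαq : ((t - u) / 2) ^ q = (t + u) / 2 := by
        rw [div_pow, hsub, htq, hu1, h2q]; ring
      have hx1 : ((t - u) / 2) ^ q - (t - u) / 2 = u := by
        rw [hαq]; field_simp; ring
      have hx2 : ((t - u) / 2) ^ q + (t - u) / 2 = t := by
        rw [hαq]; field_simp; ring
      refine ⟨(t - u) / 2, ?_, hx1⟩
      show c ^ 3 * (((t - u) / 2) ^ q - (t - u) / 2) ^ 2 * (((t - u) / 2) ^ q + (t - u) / 2) = -1
      rw [hx1, hx2, ht_def, mul_neg, mul_inv_cancel₀ hcu3]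
  -- counting
  have hV : {u : K | u ^ q + u = 0}.ncard = q := aux_count q hq1 hK hfrob hpow2
  have hUeq : {u : K | u ^ q = -u ∧ u ≠ 0} = {u : K | u ^ q + u = 0} \ {0} := by
    ext u
    simp [eq_neg_iff_add_eq_zero]
  have hU : {u : K | u ^ q = -u ∧ u ≠ 0}.ncard = q - 1 := by
    rw [hUeq, Set.ncard_diff_singleton_of_mem (by simp [zero_pow hq0]), hV]
  rw [hSchar, ← Set.ncard_image_of_injOn hinj, himg]
  exact hU
end

section
/- Let q be odd, c ∈ F_q^*, and f(X) = c(X^{q+1} + X^2) on F_{q^2}. If α = yβ with y ∈ F_q^* and β^2 a nonsquare in F_q, then f^{-1}(α) is empty; and f^{-1}(0) = βF_q, a set of exactly q elements. -/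
open Polynomial in
/-- for f(X) = c(X^{q+1} + X^2), the preimage of yβ (y ∈ F_q^*) is
empty, and f^{-1}(0) = βF_q has exactly q elements. -/
theorem stmt_12 (q : ℕ) (hq : Odd q) (K : Type*) [Field K] [Fintype K]
    (hK : Fintype.card K = q ^ 2)
    (β : K) (hbF : (β ^ 2) ^ q = β ^ 2)
    (hbns : ¬ ∃ t : K, t ^ q = t ∧ t ^ 2 = β ^ 2)
    (c : K) (hcF : c ^ q = c) (hc0 : c ≠ 0) :
    (∀ y : K, y ^ q = y → y ≠ 0 →
      {x : K | c * (x ^ (q + 1) + x ^ 2) = y * β} = ∅) ∧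
    {x : K | c * (x ^ (q + 1) + x ^ 2) = 0} =
      {x : K | ∃ z : K, z ^ q = z ∧ x = z * β} ∧
    Set.ncard {x : K | c * (x ^ (q + 1) + x ^ 2) = 0} = q := by
  classical
  -- q ≥ 2
  have hq1 : 1 ≤ q := hq.pos
  have hcard1 : 1 < Fintype.card K := Fintype.one_lt_card
  have hq2 : 2 ≤ q := by nlinarith [hK]
  -- characteristic
  obtain ⟨p, hp⟩ := CharP.exists K
  haveI hpI : Fact p.Prime := ⟨CharP.char_is_prime K p⟩
  obtain ⟨n, -, hn⟩ := FiniteField.card K p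
  have hqdvd : q ∣ p ^ (n : ℕ) := by
    rw [← hn, hK]
    exact dvd_pow_self q two_ne_zero
  obtain ⟨m, -, hqm⟩ := (Nat.dvd_prime_pow hpI.1).mp hqdvd
  have hm0 : m ≠ 0 := by rintro rfl; simp at hqm; omega
  have hp2 : p ≠ 2 := by
    intro h
    have hdvd : p ∣ q := hqm ▸ dvd_pow_self p hm0
    rw [h] at hdvd
    exact (Nat.not_even_iff_odd.mpr hq) (even_iff_two_dvd.mpr hdvd)
  -- basic power facts
  have hadd : ∀ a b : K, (a + b) ^ q = a ^ q + b ^ q := by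
    intro a b; haveI := hp; rw [hqm]; exact add_pow_char_pow a b p m
  have hpow : ∀ x : K, x ^ q ^ 2 = x := by
    intro x; have := FiniteField.pow_card x; rwa [hK] at this
  have hneg : ∀ a : K, (-a) ^ q = -(a ^ q) := fun a => Odd.neg_pow hq a
  have hsub : ∀ a b : K, (a - b) ^ q = a ^ q - b ^ q := by
    intro a b
    rw [sub_eq_add_neg, hadd, hneg, sub_eq_add_neg]
  have h2 : (2 : K) ≠ 0 := by
    intro h
    have h2' : ((2 : ℕ) : K) = 0 := by exact_mod_cast h
    have := (CharP.cast_eq_zero_iff K p 2).mp h2'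
    exact hp2 ((Nat.prime_dvd_prime_iff_eq hpI.1 Nat.prime_two).mp this)
  have h2q : (2 : K) ^ q = 2 := by
    rw [show (2 : K) = 1 + 1 by norm_num, hadd, one_pow]
  -- β facts
  have hb0 : β ≠ 0 := by
    intro h
    exact hbns ⟨0, by simp [zero_pow (by omega : q ≠ 0)], by simp [h]⟩
  have hbq : β ^ q = -β := by
    have h1 : (β ^ q) ^ 2 = β ^ 2 := by
      rw [← pow_mul, mul_comm, pow_mul, hbF]
    have key : (β ^ q - β) * (β ^ q + β) = 0 := by linear_combination h1
    rcases mul_eq_zero.mp key with h | h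
    · exact absurd ⟨β, sub_eq_zero.mp h, rfl⟩ hbns
    · exact eq_neg_of_add_eq_zero_left h
  -- (x^(q+1))^q = x^(q+1)
  have hxq1 : ∀ x : K, (x ^ (q + 1)) ^ q = x ^ (q + 1) := by
    intro x
    rw [← pow_mul, show (q + 1) * q = q * q + q by ring, pow_add,
      show q * q = q ^ 2 by ring, hpow, pow_succ, mul_comm]
  have hx2q : ∀ x : K, (x ^ 2) ^ q = (x ^ q) ^ 2 := by
    intro x; rw [← pow_mul, mul_comm, pow_mul]
  have hqq : ∀ x : K, (x ^ q) ^ q = x := by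
    intro x; rw [← pow_mul, show q * q = q ^ 2 by ring, hpow]
  -- counting: root bound
  have hroots : ∀ d : K, (Finset.univ.filter (fun x : K => x ^ q = d * x)).card ≤ q := by
    intro d
    set P : K[X] := X ^ q - C d * X with hP
    have hmon : P.Monic := by
      apply Polynomial.monic_X_pow_sub
      exact lt_of_le_of_lt (Polynomial.degree_C_mul_X_le d) (by exact_mod_cast by omega)
    have hP0 : P ≠ 0 := hmon.ne_zero
    have hdeg : P.natDegree ≤ q := by
      refine le_trans (Polynomial.natDegree_sub_le _ _) ?_
      simp only [Polynomial.natDegree_X_pow]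
      have : (C d * X).natDegree ≤ 1 := Polynomial.natDegree_C_mul_le d X |>.trans
        (by simp)
      omega
    have hsubset : Finset.univ.filter (fun x : K => x ^ q = d * x) ⊆ P.roots.toFinset := by
      intro x hx
      simp only [Finset.mem_filter, Finset.mem_univ, true_and] at hx
      rw [Multiset.mem_toFinset, Polynomial.mem_roots hP0]
      simp [Polynomial.IsRoot, hP, hx]
    calc (Finset.univ.filter (fun x : K => x ^ q = d * x)).card
        ≤ P.roots.toFinset.card := Finset.card_le_card hsubset
      _ ≤ Multiset.card P.roots := Multiset.toFinset_card_le _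
      _ ≤ P.natDegree := Polynomial.card_roots' P
      _ ≤ q := hdeg
  set Fq : Finset K := Finset.univ.filter (fun z : K => z ^ q = z) with hFqdef
  set Sq : Finset K := Finset.univ.filter (fun x : K => x ^ q = -x) with hSqdef
  have hFle : Fq.card ≤ q := by
    refine le_trans (Finset.card_le_card ?_) (hroots 1)
    intro x hx
    simp only [hFqdef, Finset.mem_filter, Finset.mem_univ, true_and] at hx ⊢
    rw [one_mul]; exact hx
  have hSle : Sq.card ≤ q := by
    refine le_trans (Finset.card_le_card ?_) (hroots (-1))
    intro x hx
    simp only [hSqdef, Finset.mem_filter, Finset.mem_univ, true_and] at hx ⊢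
    rw [neg_one_mul]; exact hx
  -- surjection F × S → K
  have hsurj : Set.SurjOn (fun z : K × K => z.1 + z.2) ↑(Fq ×ˢ Sq)
      ↑(Finset.univ : Finset K) := by
    intro x _
    refine ⟨((x + x ^ q) * 2⁻¹, (x - x ^ q) * 2⁻¹), ?_, ?_⟩
    · simp only [Finset.coe_product, Set.mem_prod, Finset.mem_coe, hFqdef, hSqdef,
        Finset.mem_filter, Finset.mem_univ, true_and]
      have hinv : ((2 : K)⁻¹) ^ q = 2⁻¹ := by rw [inv_pow, h2q]
      constructor
      · rw [mul_pow, hinv, hadd, hqq, add_comm]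
      · rw [mul_pow, hinv, hsub, hqq]
        ring
    · show (x + x ^ q) * 2⁻¹ + (x - x ^ q) * 2⁻¹ = x
      field_simp
      ring
  have hcardle : q ^ 2 ≤ Fq.card * Sq.card := by
    have := Finset.card_le_card_of_surjOn _ hsurj
    simp only [Finset.card_univ, hK, Finset.card_product] at this
    exact this
  have hS : Sq.card = q := by nlinarith
  -- set of zeros equals Sq
  have hzero : {x : K | c * (x ^ (q + 1) + x ^ 2) = 0} = {x : K | x ^ q = -x} := by
    ext x
    simp only [Set.mem_setOf_eq]
    constructor
    · intro hx
      have hx' : x ^ (q + 1) + x ^ 2 = 0 := by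
        rcases mul_eq_zero.mp hx with h | h
        · exact absurd h hc0
        · exact h
      have : x * (x ^ q + x) = 0 := by
        rw [pow_succ, mul_comm] at hx'
        linear_combination hx'
      rcases mul_eq_zero.mp this with h | h
      · rw [h]; simp [zero_pow (by omega : q ≠ 0)]
      · exact eq_neg_of_add_eq_zero_left h
    · intro hx
      rw [pow_succ, hx]
      ring
  -- part 1
  refine ⟨?_, ?_, ?_⟩
  · intro y hy hy0
    rw [Set.eq_empty_iff_forall_notMem]
    intro x hx
    simp only [Set.mem_setOf_eq] at hx
    have hxq : (c * (x ^ (q + 1) + x ^ 2)) ^ q = c * (x ^ (q + 1) + (x ^ q) ^ 2) := by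
      rw [mul_pow, hcF, hadd, hxq1, hx2q]
    have heq : c * (x ^ (q + 1) + (x ^ q) ^ 2) = -(y * β) := by
      rw [← hxq, hx, mul_pow, hy, hbq]
      ring
    have heq2 : c * (x ^ (q + 1) + (x ^ q) ^ 2) = -(c * (x ^ (q + 1) + x ^ 2)) := by
      rw [heq, hx]
    have hps : x ^ (q + 1) = x ^ q * x := by rw [pow_succ]
    have hsq : (x ^ q + x) ^ 2 * c = 0 := by linear_combination heq2 - 2 * c * hps
    have hsq0 : (x ^ q + x) ^ 2 = 0 := by
      rcases mul_eq_zero.mp hsq with h | h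
      · exact h
      · exact absurd h hc0
    have hxq' : x ^ q = -x := by
      have h0 := pow_eq_zero_iff (n := 2) (by omega) |>.mp hsq0
      exact eq_neg_of_add_eq_zero_left h0
    have : y * β = 0 := by
      rw [← hx, hps, hxq']
      ring
    rcases mul_eq_zero.mp this with h | h
    · exact hy0 h
    · exact hb0 h
  · rw [hzero]
    ext x
    simp only [Set.mem_setOf_eq]
    constructor
    · intro hx
      refine ⟨x * β⁻¹, ?_, ?_⟩
      · rw [mul_pow, hx, inv_pow, hbq]
        field_simp
      · field_simp
    · rintro ⟨z, hz, rfl⟩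
      rw [mul_pow, hz, hbq]
      ring
  · rw [hzero]
    have : {x : K | x ^ q = -x} = ↑Sq := by
      ext x; simp [hSqdef]
    rw [this, Set.ncard_coe_finset, hS]
end

section
/- Let q be odd, β ∈ F_{q^2} with β^2 a nonsquare in F_q, c ∈ F_q^*, and f(X) = c(X^{q+1} + X^2). Then for all x, y ∈ F_q and n ≥ 1, f^{(n)}(x + yβ) = (2cx)^{2^n - 1} (x + yβ). -/
/-- f^{(n)}(x + yβ) = (2cx)^{2^n - 1} (x + yβ) for
f(X) = c(X^{q+1} + X^2). -/
theorem stmt_13 (q : ℕ) (hq : Odd q) (K : Type*) [Field K] [Fintype K]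
    (hK : Fintype.card K = q ^ 2)
    (β : K) (hbF : (β ^ 2) ^ q = β ^ 2)
    (hbns : ¬ ∃ t : K, t ^ q = t ∧ t ^ 2 = β ^ 2)
    (c : K) (hcF : c ^ q = c) (hc0 : c ≠ 0)
    (x y : K) (hx : x ^ q = x) (hy : y ^ q = y) :
    ∀ n : ℕ, 1 ≤ n →
      (fun X : K => c * (X ^ (q + 1) + X ^ 2))^[n] (x + y * β) =
        (2 * c * x) ^ (2 ^ n - 1) * (x + y * β) := by
  -- the characteristic is a prime p, and q is a power of p
  have hp' : (ringChar K).Prime := CharP.char_is_prime K (ringChar K)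
  haveI := Fact.mk hp'
  obtain ⟨m, hm⟩ := FiniteField.card K (ringChar K)
  have hqd : q ∣ (ringChar K) ^ (m : ℕ) := by
    rw [← hm.2, hK]
    exact dvd_pow_self q two_ne_zero
  obtain ⟨j, hjm, hqe⟩ := (Nat.dvd_prime_pow hp').mp hqd
  haveI : ExpChar K (ringChar K) := ExpChar.prime hp'
  have hfrob : ∀ a b : K, (a + b) ^ q = a ^ q + b ^ q := by
    intro a b
    rw [hqe]
    exact add_pow_expChar_pow a b (ringChar K) j
  have h2q : (2 : K) ^ q = 2 := by
    have := hfrob 1 1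
    simpa [one_add_one_eq_two] using this
  -- β^q = -β
  have hb : β ^ q = -β := by
    have h1 : (β ^ q) ^ 2 = β ^ 2 := by
      rw [← pow_mul, mul_comm, pow_mul, hbF]
    have h2 : (β ^ q - β) * (β ^ q + β) = 0 := by linear_combination h1
    rcases mul_eq_zero.mp h2 with h | h
    · exact absurd ⟨β, sub_eq_zero.mp h, rfl⟩ hbns
    · exact eq_neg_of_add_eq_zero_left h
  have hsq : (x + y * β) ^ q = x - y * β := by
    rw [hfrob, mul_pow, hx, hy, hb]
    ring
  have hstep : ∀ a : K, a ^ q = a →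
      c * ((a * (x + y * β)) ^ (q + 1) + (a * (x + y * β)) ^ 2) =
        a ^ 2 * (2 * c * x) * (x + y * β) := by
    intro a ha
    have h1 : (a * (x + y * β)) ^ (q + 1)
        = (a * (x - y * β)) * (a * (x + y * β)) := by
      rw [pow_succ, mul_pow, ha, hsq]
    rw [h1]
    ring
  have h2cx : (2 * c * x) ^ q = 2 * c * x := by
    rw [mul_pow, mul_pow, h2q, hcF, hx]
  have main : ∀ n : ℕ,
      (fun X : K => c * (X ^ (q + 1) + X ^ 2))^[n + 1] (x + y * β) =
        (2 * c * x) ^ (2 ^ (n + 1) - 1) * (x + y * β) := by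
    intro n
    induction n with
    | zero =>
        have := hstep 1 (one_pow q)
        simpa using this
    | succ n ih =>
        rw [Function.iterate_succ_apply', ih]
        have ha : ((2 * c * x) ^ (2 ^ (n + 1) - 1)) ^ q
            = (2 * c * x) ^ (2 ^ (n + 1) - 1) := by
          rw [← pow_mul, Nat.mul_comm, pow_mul, h2cx]
        have hkey := hstep _ ha
        rw [hkey, ← pow_mul, ← pow_succ]
        have hexp : (2 ^ (n + 1) - 1) * 2 + 1 = 2 ^ (n + 1 + 1) - 1 := by
          have h1 : 1 ≤ 2 ^ (n + 1) := Nat.one_le_two_pow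
          have h2 : 2 ^ (n + 1 + 1) = 2 * 2 ^ (n + 1) := by rw [pow_succ]; ring
          omega
        rw [hexp]
  intro n hn
  obtain ⟨k, rfl⟩ := Nat.exists_eq_succ_of_ne_zero (by omega : n ≠ 0)
  exact main k
end

section
/- Let q be odd with q - 1 = 2^s r, r odd, c ∈ F_q^*, and f(X) = c(X^{q+1} + X^2) on F_{q^2}. For every divisor d > 1 of r, there are exactly q·φ(d)/ord_d(2) cycles of f of length ord_d(2) attached to elements θ = 2cx of order d; every cycle of length greater than 1 arises this way. For d = 1 there are q + 1 fixed points. -/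
open Finset Function Polynomial
open scoped Classical

section Aux

variable {K : Type*} [Field K] [Fintype K]

private lemma auxRoots (p : K[X]) (hp : p ≠ 0) :
    (univ.filter fun x : K => p.eval x = 0).card ≤ p.natDegree := by
  classical
  refine le_trans (le_trans (Finset.card_le_card ?_) (Multiset.toFinset_card_le _)) p.card_roots'
  intro x hx
  rw [Finset.mem_filter] at hx
  rw [Multiset.mem_toFinset, Polynomial.mem_roots hp]
  exact hx.2

private lemma auxFiber (q : ℕ) (hq1 : 2 ≤ q) (hodd : Odd q)
    (hK : Fintype.card K = q ^ 2)
    (hfrob : ∀ x y : K, (x + y) ^ q = x ^ q + y ^ q)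
    (hqq : ∀ x : K, (x ^ q) ^ q = x)
    (z : K) (hz : z ^ q = z) :
    (univ.filter fun x : K => x + x ^ q = z).card = q := by
  classical
  have hker : (univ.filter fun x : K => x + x ^ q = 0).card ≤ q := by
    have hPdeg : ((X : K[X]) ^ q + X).natDegree = q := by
      rw [natDegree_add_eq_left_of_natDegree_lt
        (by simp only [natDegree_X_pow, natDegree_X]; omega), natDegree_X_pow]
    have hPne : ((X : K[X]) ^ q + X) ≠ 0 := by
      intro h; rw [h, natDegree_zero] at hPdeg; omega
    have h := auxRoots ((X : K[X]) ^ q + X) hPne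
    rw [hPdeg] at h
    refine le_trans (le_of_eq ?_) h
    congr 1
    apply Finset.filter_congr; intro x _
    simp [Polynomial.eval_add, Polynomial.eval_pow, Polynomial.eval_X, add_comm]
  have hFq : (univ.filter fun y : K => y ^ q = y).card ≤ q := by
    have hPdeg : ((X : K[X]) ^ q - X).natDegree = q := by
      rw [sub_eq_add_neg, natDegree_add_eq_left_of_natDegree_lt
        (by simp only [natDegree_X_pow, natDegree_neg, natDegree_X]; omega), natDegree_X_pow]
    have hPne : ((X : K[X]) ^ q - X) ≠ 0 := by
      intro h; rw [h, natDegree_zero] at hPdeg; omega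
    have h := auxRoots ((X : K[X]) ^ q - X) hPne
    rw [hPdeg] at h
    refine le_trans (le_of_eq ?_) h
    congr 1
    apply Finset.filter_congr; intro x _
    simp [Polynomial.eval_sub, Polynomial.eval_pow, Polynomial.eval_X, sub_eq_zero, eq_comm]
  have hfib : ∀ z₀ : K, (∃ x₀, x₀ + x₀ ^ q = z₀) →
      (univ.filter fun x : K => x + x ^ q = z₀).card
        = (univ.filter fun x : K => x + x ^ q = 0).card := by
    rintro z₀ ⟨x₀, hx₀⟩
    apply Finset.card_bij (fun x _ => x - x₀)
    · intro a ha
      rw [Finset.mem_filter] at ha ⊢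
      refine ⟨Finset.mem_univ _, ?_⟩
      have hnp : (a - x₀) ^ q = a ^ q - x₀ ^ q := by
        rw [sub_eq_add_neg, hfrob, hodd.neg_pow, ← sub_eq_add_neg]
      rw [hnp]
      have : a - x₀ + (a ^ q - x₀ ^ q) = (a + a ^ q) - (x₀ + x₀ ^ q) := by ring
      rw [this, ha.2, hx₀, sub_self]
    · intro a _ b _ h
      have := congrArg (· + x₀) h
      simpa using this
    · intro b hb
      refine ⟨b + x₀, ?_, by ring⟩
      rw [Finset.mem_filter] at hb ⊢
      refine ⟨Finset.mem_univ _, ?_⟩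
      rw [hfrob]
      have : b + x₀ + (b ^ q + x₀ ^ q) = (b + b ^ q) + (x₀ + x₀ ^ q) := by ring
      rw [this, hb.2, hx₀, zero_add]
  set k := (univ.filter fun x : K => x + x ^ q = 0).card with hk
  have htot : (univ.image fun x : K => x + x ^ q).card * k = q ^ 2 := by
    calc (univ.image fun x : K => x + x ^ q).card * k
        = ∑ _z₀ ∈ univ.image (fun x : K => x + x ^ q), k := by
          rw [Finset.sum_const, smul_eq_mul]
      _ = ∑ z₀ ∈ univ.image (fun x : K => x + x ^ q),
            (univ.filter fun x : K => x + x ^ q = z₀).card := by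
          refine Finset.sum_congr rfl fun z₀ hz₀ => ?_
          rcases Finset.mem_image.mp hz₀ with ⟨x₀, _, h⟩
          exact (hfib z₀ ⟨x₀, h⟩).symm
      _ = Finset.univ.card := (Finset.card_eq_sum_card_fiberwise
            (fun x _ => Finset.mem_image_of_mem _ (Finset.mem_univ x))).symm
      _ = q ^ 2 := by rw [Finset.card_univ, hK]
  have himg_sub : (univ.image fun x : K => x + x ^ q)
      ⊆ (univ.filter fun y : K => y ^ q = y) := by
    intro y hy
    rcases Finset.mem_image.mp hy with ⟨x, _, rfl⟩
    rw [Finset.mem_filter]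
    refine ⟨Finset.mem_univ _, ?_⟩
    rw [hfrob, hqq]; ring
  have himg_le : (univ.image fun x : K => x + x ^ q).card ≤ q :=
    le_trans (Finset.card_le_card himg_sub) hFq
  have hq0 : 0 < q := by omega
  have hsq : q ^ 2 = q * q := sq q
  have hkq : k = q := by
    have h1 : q * q ≤ (univ.image fun x : K => x + x ^ q).card * q := by
      calc q * q = (univ.image fun x : K => x + x ^ q).card * k := by rw [htot, hsq]
        _ ≤ (univ.image fun x : K => x + x ^ q).card * q :=
            Nat.mul_le_mul_left _ hker
      -- note: hker bounds k
    have h2 : q ≤ (univ.image fun x : K => x + x ^ q).card :=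
      Nat.le_of_mul_le_mul_right h1 hq0
    have h3 : (univ.image fun x : K => x + x ^ q).card = q := le_antisymm himg_le h2
    have : q * k = q * q := by rw [← hsq, ← htot, h3]
    exact Nat.eq_of_mul_eq_mul_left hq0 this
  have himg_card : (univ.image fun x : K => x + x ^ q).card = q := by
    have h4 := htot
    rw [hkq, hsq] at h4
    exact Nat.eq_of_mul_eq_mul_right hq0 h4
  have himg : (univ.image fun x : K => x + x ^ q)
      = (univ.filter fun y : K => y ^ q = y) := by
    apply Finset.eq_of_subset_of_card_le himg_sub
    rw [himg_card]; exact hFq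
  have hzmem : z ∈ univ.image fun x : K => x + x ^ q := by
    rw [himg]; exact Finset.mem_filter.mpr ⟨Finset.mem_univ _, hz⟩
  rcases Finset.mem_image.mp hzmem with ⟨x₀, _, hx₀⟩
  rw [hfib z ⟨x₀, hx₀⟩]
  exact hkq

private lemma auxPre (q : ℕ) (hq1 : 2 ≤ q) (hodd : Odd q)
    (hK : Fintype.card K = q ^ 2)
    (hfrob : ∀ x y : K, (x + y) ^ q = x ^ q + y ^ q)
    (hqq : ∀ x : K, (x ^ q) ^ q = x)
    (c : K) (hcF : c ^ q = c) (hc0 : c ≠ 0)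
    (Sy : Finset K) (hSy : ∀ y ∈ Sy, y ^ q = y) :
    (univ.filter fun x : K => c * (x + x ^ q) ∈ Sy).card = q * Sy.card := by
  classical
  rw [Finset.card_eq_sum_card_fiberwise
    (s := univ.filter fun x : K => c * (x + x ^ q) ∈ Sy)
    (f := fun x : K => c * (x + x ^ q)) (t := Sy)
    (fun x hx => (Finset.mem_filter.mp hx).2)]
  have hterm : ∀ y ∈ Sy,
      ((univ.filter fun x : K => c * (x + x ^ q) ∈ Sy).filter
        (fun x => c * (x + x ^ q) = y)).card = q := by
    intro y hy
    rw [Finset.filter_filter]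
    have hset : (univ.filter fun x : K => c * (x + x ^ q) ∈ Sy ∧ c * (x + x ^ q) = y)
        = univ.filter fun x : K => x + x ^ q = c⁻¹ * y := by
      apply Finset.filter_congr; intro x _
      constructor
      · rintro ⟨-, h⟩
        rw [← h]
        field_simp
      · intro h
        have h' : c * (x + x ^ q) = y := by rw [h]; field_simp
        exact ⟨h' ▸ hy, h'⟩
    rw [hset]
    exact auxFiber q hq1 hodd hK hfrob hqq (c⁻¹ * y)
      (by rw [mul_pow, inv_pow, hcF, hSy y hy])
  rw [Finset.sum_congr rfl hterm, Finset.sum_const, smul_eq_mul, mul_comm]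

private lemma auxOrd (q : ℕ) (hq1 : 2 ≤ q) (hK : Fintype.card K = q ^ 2)
    (d : ℕ) (hd : d ∣ q - 1) :
    (univ.filter fun y : K => orderOf y = d).card = Nat.totient d := by
  classical
  have hd0 : 0 < d := Nat.pos_of_dvd_of_pos hd (by omega)
  have hdvd2 : (q - 1) ∣ q ^ 2 - 1 := by
    refine ⟨q + 1, ?_⟩
    have h2 : q ^ 2 = q * q := sq q
    obtain ⟨t, rfl⟩ : ∃ t, q = t + 2 := ⟨q - 2, by omega⟩
    have h3 : (t + 2) * (t + 2) = t * t + 4 * t + 4 := by ring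
    have h4 : (t + 2 - 1) * (t + 2 + 1) = (t + 1) * (t + 3) := by norm_num
    have h5 : (t + 1) * (t + 3) = t * t + 4 * t + 3 := by ring
    omega
  have hdd : d ∣ Fintype.card Kˣ := by
    rw [Fintype.card_units, hK]
    exact hd.trans hdvd2
  have hcy := IsCyclic.card_orderOf_eq_totient (α := Kˣ) (d := d) hdd
  rw [← hcy]
  refine (Finset.card_bij (fun (u : Kˣ) _ => (u : K)) ?_ ?_ ?_).symm
  · intro u hu
    simp only [Finset.mem_filter, Finset.mem_univ, true_and] at hu ⊢
    rw [orderOf_units]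
    exact hu
  · intro u _ v _ h
    exact Units.ext h
  · intro y hy
    simp only [Finset.mem_filter, Finset.mem_univ, true_and] at hy
    have hy1 : y ^ d = 1 := by rw [← hy]; exact pow_orderOf_eq_one y
    have hyu : IsUnit y := IsUnit.of_mul_eq_one (y ^ (d - 1))
      (by rw [← pow_succ', Nat.sub_add_cancel hd0, hy1])
    refine ⟨hyu.unit, ?_, hyu.unit_spec⟩
    simp only [Finset.mem_filter, Finset.mem_univ, true_and]
    rw [← orderOf_units, hyu.unit_spec, hy]

end Aux

section Dyn

variable {K : Type*} [Field K] [Fintype K]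

private lemma auxFx (q : ℕ) (c : K) (x : K) :
    c * (x ^ (q + 1) + x ^ 2) = x * (c * (x + x ^ q)) := by
  rw [pow_succ]
  ring

private lemma auxThetaF (q : ℕ)
    (hfrob : ∀ x y : K, (x + y) ^ q = x ^ q + y ^ q)
    (hqq : ∀ x : K, (x ^ q) ^ q = x)
    (c : K) (hcF : c ^ q = c) (x : K) :
    c * ((c * (x ^ (q + 1) + x ^ 2)) + (c * (x ^ (q + 1) + x ^ 2)) ^ q)
      = (c * (x + x ^ q)) ^ 2 := by
  have h1 : (c * (x ^ (q + 1) + x ^ 2)) ^ q = c * (x * x ^ q + (x ^ q) ^ 2) := by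
    rw [mul_pow, hfrob, hcF]
    congr 1
    have h2 : (x ^ (q + 1)) ^ q = x * x ^ q := by
      rw [pow_succ, mul_pow, hqq]
    have h3 : (x ^ 2) ^ q = (x ^ q) ^ 2 := pow_right_comm x 2 q
    rw [h2, h3]
  rw [h1, pow_succ]
  ring

private lemma auxIter (q : ℕ)
    (hfrob : ∀ x y : K, (x + y) ^ q = x ^ q + y ^ q)
    (hqq : ∀ x : K, (x ^ q) ^ q = x)
    (c : K) (hcF : c ^ q = c) :
    ∀ (n : ℕ) (x : K),
      (fun X : K => c * (X ^ (q + 1) + X ^ 2))^[n] x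
          = x * (c * (x + x ^ q)) ^ (2 ^ n - 1)
      ∧ c * ((fun X : K => c * (X ^ (q + 1) + X ^ 2))^[n] x
          + ((fun X : K => c * (X ^ (q + 1) + X ^ 2))^[n] x) ^ q)
          = (c * (x + x ^ q)) ^ 2 ^ n := by
  intro n
  induction n with
  | zero => intro x; simp
  | succ n ih =>
    intro x
    obtain ⟨h1, h2⟩ := ih x
    set F := fun X : K => c * (X ^ (q + 1) + X ^ 2) with hF
    set y := F^[n] x with hy
    have hstep : F^[n + 1] x = F y := Function.iterate_succ_apply' F n x
    have hFy : F y = y * (c * (y + y ^ q)) := auxFx q c y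
    have e1 : 2 ^ n - 1 + 2 ^ n = 2 ^ (n + 1) - 1 := by
      have h3 : 1 ≤ 2 ^ n := Nat.one_le_two_pow
      have h4 : 2 ^ (n + 1) = 2 ^ n * 2 := pow_succ 2 n
      omega
    constructor
    · rw [hstep, hFy, h2, h1, mul_assoc, ← pow_add, e1]
    · rw [hstep]
      calc c * (F y + (F y) ^ q) = (c * (y + y ^ q)) ^ 2 :=
            auxThetaF q hfrob hqq c hcF y
        _ = ((c * (x + x ^ q)) ^ 2 ^ n) ^ 2 := by rw [h2]
        _ = (c * (x + x ^ q)) ^ 2 ^ (n + 1) := by rw [← pow_mul, ← pow_succ]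

private lemma auxPeriod (q : ℕ) (hq1 : 2 ≤ q)
    (hfrob : ∀ x y : K, (x + y) ^ q = x ^ q + y ^ q)
    (hqq : ∀ x : K, (x ^ q) ^ q = x)
    (c : K) (hcF : c ^ q = c) (hc0 : c ≠ 0)
    (x : K) (hx : x ≠ 0) (hθ : c * (x + x ^ q) ≠ 0)
    (hdodd : Odd (orderOf (c * (x + x ^ q)))) :
    Function.minimalPeriod (fun X : K => c * (X ^ (q + 1) + X ^ 2)) x
      = orderOf (2 : ZMod (orderOf (c * (x + x ^ q)))) := by
  set d := orderOf (c * (x + x ^ q)) with hd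
  have hd0 : 0 < d := hdodd.pos
  haveI : NeZero d := ⟨hd0.ne'⟩
  have hunit : IsUnit (2 : ZMod d) := by
    have h2 : ((2 : ℕ) : ZMod d) = (2 : ZMod d) := by push_cast; rfl
    rw [← h2, ZMod.isUnit_iff_coprime]
    exact Nat.coprime_two_left.mpr hdodd
  have hm0 : 0 < orderOf (2 : ZMod d) := by
    rw [← hunit.unit_spec, orderOf_units]
    exact orderOf_pos _
  have hiff : ∀ n : ℕ, (fun X : K => c * (X ^ (q + 1) + X ^ 2))^[n] x = x
      ↔ orderOf (2 : ZMod d) ∣ n := by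
    intro n
    rw [(auxIter q hfrob hqq c hcF n x).1]
    have step1 : x * (c * (x + x ^ q)) ^ (2 ^ n - 1) = x
        ↔ (c * (x + x ^ q)) ^ (2 ^ n - 1) = 1 := by
      rw [mul_right_eq_self₀]
      simp [hx]
    rw [step1, ← orderOf_dvd_iff_pow_eq_one, ← hd]
    have h1 : 1 ≤ 2 ^ n := Nat.one_le_two_pow
    constructor
    · intro h
      rw [orderOf_dvd_iff_pow_eq_one]
      have hmod : (1 : ℕ) ≡ 2 ^ n [MOD d] := (Nat.modEq_iff_dvd' h1).mpr h
      have h5 := (ZMod.natCast_eq_natCast_iff _ _ _).mpr hmod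
      push_cast at h5
      exact h5.symm
    · intro h
      rw [orderOf_dvd_iff_pow_eq_one] at h
      have h5 : ((2 ^ n : ℕ) : ZMod d) = ((1 : ℕ) : ZMod d) := by push_cast; exact h
      have hmod := (ZMod.natCast_eq_natCast_iff _ _ _).mp h5
      exact (Nat.modEq_iff_dvd' h1).mp hmod.symm
  have hper : Function.IsPeriodicPt (fun X : K => c * (X ^ (q + 1) + X ^ 2))
      (orderOf (2 : ZMod d)) x := (hiff _).mpr dvd_rfl
  have hdd1 := hper.minimalPeriod_dvd
  have hdd2 : orderOf (2 : ZMod d) ∣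
      Function.minimalPeriod (fun X : K => c * (X ^ (q + 1) + X ^ 2)) x :=
    (hiff _).mp (Function.isPeriodicPt_minimalPeriod _ x)
  exact Nat.dvd_antisymm hdd1 hdd2

private lemma auxPow (q : ℕ) (hq1 : 2 ≤ q) (d : ℕ) (hd : d ∣ q - 1)
    (y : K) (hy : orderOf y = d) : y ^ q = y := by
  have h1 : y ^ (q - 1) = 1 := by
    obtain ⟨m, hm⟩ := hd
    rw [hm, pow_mul, ← hy, pow_orderOf_eq_one, one_pow]
  have hq' : q - 1 + 1 = q := by omega
  calc y ^ q = y ^ (q - 1 + 1) := by rw [hq']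
    _ = y ^ (q - 1) * y := pow_succ y _
    _ = y := by rw [h1, one_mul]

end Dyn

open scoped Classical in
/-- cycle structure of f(X) = c(X^{q+1} + X^2): for every n > 1 the
points of exact period n are counted by q·φ(d) summed over odd divisors d of q - 1
with ord_d(2) = n; every cycle length greater than 1 is ord_d(2) for such a d; and
there are exactly q + 1 fixed points. -/
theorem stmt_14 (q s r : ℕ) (hq : Odd q) (hsr : q - 1 = 2 ^ s * r) (hr : Odd r)
    (K : Type*) [Field K] [Fintype K] (hK : Fintype.card K = q ^ 2)
    (c : K) (hcF : c ^ q = c) (hc0 : c ≠ 0) :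
    (∀ n : ℕ, 1 < n →
      Set.ncard {α : K |
          Function.minimalPeriod (fun X : K => c * (X ^ (q + 1) + X ^ 2)) α = n} =
        ∑ d ∈ (q - 1).divisors.filter
            (fun d => Odd d ∧ orderOf ((2 : ZMod d)) = n),
          q * Nat.totient d) ∧
    (∀ α : K,
      1 < Function.minimalPeriod (fun X : K => c * (X ^ (q + 1) + X ^ 2)) α →
      ∃ d : ℕ, d ∣ q - 1 ∧ Odd d ∧ 1 < d ∧
        Function.minimalPeriod (fun X : K => c * (X ^ (q + 1) + X ^ 2)) α =
          orderOf ((2 : ZMod d))) ∧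
    Set.ncard {α : K | c * (α ^ (q + 1) + α ^ 2) = α} = q + 1 := by
  have hq1 : 2 ≤ q := by
    have h1 : 1 < Fintype.card K := Fintype.one_lt_card
    rw [hK] at h1
    by_contra h
    push_neg at h
    have h2 : q ≤ 1 := by omega
    have h3 : q ^ 2 ≤ 1 ^ 2 := Nat.pow_le_pow_left h2 2
    omega
  have hq3 : 3 ≤ q := by
    rcases hq with ⟨m, hm⟩; omega
  have hqq : ∀ x : K, (x ^ q) ^ q = x := by
    intro x
    have h := FiniteField.pow_card x
    rw [hK] at h
    calc (x ^ q) ^ q = x ^ (q * q) := (pow_mul x q q).symm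
      _ = x ^ q ^ 2 := by rw [sq]
      _ = x := h
  have hfrob : ∀ x y : K, (x + y) ^ q = x ^ q + y ^ q := by
    haveI hp : Fact (Nat.Prime (ringChar K)) := ⟨CharP.char_is_prime K (ringChar K)⟩
    obtain ⟨n, hprime, hcard⟩ := FiniteField.card K (ringChar K)
    have hqdvd : q ∣ ringChar K ^ (n : ℕ) := by
      rw [← hcard, hK]; exact dvd_pow_self q two_ne_zero
    obtain ⟨k, -, hqpk⟩ := (Nat.dvd_prime_pow hprime).mp hqdvd
    intro x y
    rw [hqpk]
    exact add_pow_char_pow x y (ringChar K) k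
  set f := fun X : K => c * (X ^ (q + 1) + X ^ 2) with hf
  have hf0 : f 0 = 0 := by
    simp only [hf]
    rw [zero_pow (by omega : q + 1 ≠ 0), zero_pow (by omega : 2 ≠ 0)]
    ring
  have hθ0 : c * ((0 : K) + 0 ^ q) = 0 := by
    rw [zero_pow (by omega : q ≠ 0)]; ring
  -- forward classification
  have hfwd : ∀ (x : K) (n : ℕ), 1 < n → Function.minimalPeriod f x = n →
      x ≠ 0 ∧ c * (x + x ^ q) ≠ 0 ∧ Odd (orderOf (c * (x + x ^ q))) ∧
      orderOf (c * (x + x ^ q)) ∣ q - 1 ∧ 1 < orderOf (c * (x + x ^ q)) ∧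
      n = orderOf (2 : ZMod (orderOf (c * (x + x ^ q)))) := by
    intro x n hn h
    have hper : f^[n] x = x := by
      rw [← h]; exact Function.isPeriodicPt_minimalPeriod f x
    have hx : x ≠ 0 := by
      rintro rfl
      have h1 : Function.minimalPeriod f 0 = 1 :=
        Function.minimalPeriod_eq_one_iff_isFixedPt.mpr hf0
      omega
    have hθ : c * (x + x ^ q) ≠ 0 := by
      intro hz
      have hfx : f x = 0 := by
        show c * (x ^ (q + 1) + x ^ 2) = 0
        rw [auxFx q c x, hz, mul_zero]
      obtain ⟨m, rfl⟩ : ∃ m, n = m + 1 := ⟨n - 1, by omega⟩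
      have hzero : f^[m + 1] x = 0 := by
        rw [Function.iterate_succ_apply, hfx]
        exact Function.iterate_fixed hf0 m
      exact hx (by rw [← hper, hzero])
    have hpow : (c * (x + x ^ q)) ^ (2 ^ n - 1) = 1 := by
      have h1 := (auxIter q hfrob hqq c hcF n x).1
      rw [← hf, hper] at h1
      have h2 := h1.symm
      rwa [mul_right_eq_self₀, or_iff_left hx] at h2
    have hddvd : orderOf (c * (x + x ^ q)) ∣ 2 ^ n - 1 :=
      orderOf_dvd_of_pow_eq_one hpow
    have hoddpow : Odd (2 ^ n - 1) :=
      Nat.Even.sub_odd Nat.one_le_two_pow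
        (Nat.even_pow.mpr ⟨even_two, by omega⟩) odd_one
    have hdodd : Odd (orderOf (c * (x + x ^ q))) := by
      rcases Nat.even_or_odd (orderOf (c * (x + x ^ q))) with he | ho
      · exfalso
        have h2 : 2 ∣ 2 ^ n - 1 := dvd_trans he.two_dvd hddvd
        rw [Nat.odd_iff] at hoddpow
        omega
      · exact ho
    have hθq : (c * (x + x ^ q)) ^ q = c * (x + x ^ q) := by
      rw [mul_pow, hcF, hfrob, hqq]; ring
    have hd1 : orderOf (c * (x + x ^ q)) ∣ q - 1 := by
      apply orderOf_dvd_of_pow_eq_one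
      have hq' : q - 1 + 1 = q := by omega
      have h3 : (c * (x + x ^ q)) ^ (q - 1 + 1) = c * (x + x ^ q) := by
        rw [hq', hθq]
      rw [pow_succ] at h3
      exact mul_right_cancel₀ hθ (h3.trans (one_mul _).symm)
    have hmain := auxPeriod q hq1 hfrob hqq c hcF hc0 x hx hθ hdodd
    rw [← hf] at hmain
    have hd1' : 1 < orderOf (c * (x + x ^ q)) := by
      rcases Nat.lt_or_ge (orderOf (c * (x + x ^ q))) 2 with hlt | hge
      · exfalso
        have hne : orderOf (c * (x + x ^ q)) = 1 := by
          have := hdodd.pos; omega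
        have hθ1 : c * (x + x ^ q) = 1 := orderOf_eq_one_iff.mp hne
        have hfix : f x = x := by
          show c * (x ^ (q + 1) + x ^ 2) = x
          rw [auxFx q c x, hθ1, mul_one]
        have h1 : Function.minimalPeriod f x = 1 :=
          Function.minimalPeriod_eq_one_iff_isFixedPt.mpr hfix
        omega
      · omega
    exact ⟨hx, hθ, hdodd, hd1, hd1', by rw [← h, hmain]⟩
  refine ⟨?_, ?_, ?_⟩
  · -- part 1
    intro n hn
    rw [Set.ncard_eq_toFinset_card', Set.toFinset_setOf]
    set D := (q - 1).divisors.filter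
      (fun d => Odd d ∧ orderOf ((2 : ZMod d)) = n) with hD
    have hstep : (univ.filter fun x : K => Function.minimalPeriod f x = n)
        = univ.filter fun x : K => orderOf (c * (x + x ^ q)) ∈ D := by
      apply Finset.filter_congr
      intro x _
      constructor
      · intro h
        obtain ⟨hx, hθ, hdodd, hdd, hd1, hne⟩ := hfwd x n hn h
        rw [hD, Finset.mem_filter, Nat.mem_divisors]
        exact ⟨⟨hdd, by omega⟩, hdodd, hne.symm⟩
      · intro h
        rw [hD, Finset.mem_filter, Nat.mem_divisors] at h
        obtain ⟨⟨hdd, -⟩, hdodd, hordn⟩ := h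
        have hθ : c * (x + x ^ q) ≠ 0 := by
          intro hz
          have hdodd' := hdodd
          rw [hz] at hdodd'
          have h0 : (0 : K) ^ orderOf (0 : K) = 1 := pow_orderOf_eq_one 0
          rw [zero_pow hdodd'.pos.ne'] at h0
          exact zero_ne_one h0
        have hx : x ≠ 0 := by
          rintro rfl
          exact hθ hθ0
        have hmain := auxPeriod q hq1 hfrob hqq c hcF hc0 x hx hθ hdodd
        rw [← hf] at hmain
        rw [hmain, hordn]
    rw [hstep]
    rw [Finset.card_eq_sum_card_fiberwise
      (s := univ.filter fun x : K => orderOf (c * (x + x ^ q)) ∈ D)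
      (f := fun x : K => orderOf (c * (x + x ^ q))) (t := D)
      (fun x hx => (Finset.mem_filter.mp hx).2)]
    refine Finset.sum_congr rfl fun d hd => ?_
    have hDd : d ∣ q - 1 := by
      rw [hD, Finset.mem_filter, Nat.mem_divisors] at hd
      exact hd.1.1
    rw [Finset.filter_filter]
    have hset2 : (univ.filter fun x : K =>
          orderOf (c * (x + x ^ q)) ∈ D ∧ orderOf (c * (x + x ^ q)) = d)
        = univ.filter fun x : K =>
            c * (x + x ^ q) ∈ (univ.filter fun y : K => orderOf y = d) := by
      apply Finset.filter_congr
      intro x _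
      simp only [Finset.mem_filter, Finset.mem_univ, true_and]
      constructor
      · rintro ⟨-, h⟩; exact h
      · intro h; exact ⟨h ▸ hd, h⟩
    rw [hset2, auxPre q hq1 hq hK hfrob hqq c hcF hc0 _
      (by
        intro y hy
        simp only [Finset.mem_filter, Finset.mem_univ, true_and] at hy
        exact auxPow q hq1 d hDd y hy),
      auxOrd q hq1 hK d hDd]
  · -- part 2
    intro α hα
    obtain ⟨hx, hθ, hdodd, hdd, hd1, hne⟩ :=
      hfwd α (Function.minimalPeriod f α) hα rfl
    exact ⟨orderOf (c * (α + α ^ q)), hdd, hdodd, hd1, hne⟩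
  · -- part 3: fixed points
    rw [Set.ncard_eq_toFinset_card', Set.toFinset_setOf]
    have hsetf : (univ.filter fun α : K => c * (α ^ (q + 1) + α ^ 2) = α)
        = insert (0 : K)
            (univ.filter fun α : K => c * (α + α ^ q) ∈ ({1} : Finset K)) := by
      ext α
      simp only [Finset.mem_filter, Finset.mem_univ, true_and,
        Finset.mem_insert, Finset.mem_singleton]
      rw [auxFx q c α, mul_right_eq_self₀]
      tauto
    rw [hsetf, Finset.card_insert_of_notMem, auxPre q hq1 hq hK hfrob hqq c hcF hc0 _
      (by
        intro y hy
        simp only [Finset.mem_singleton] at hy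
        rw [hy]; exact one_pow q)]
    · simp
    · simp only [Finset.mem_filter, Finset.mem_univ, true_and, Finset.mem_singleton]
      rw [hθ0]
      exact zero_ne_one
end

section
/- Let q be odd, β with β^2 a nonsquare in F_q, c ∈ F_q^*, and f(X) = c(X^{q+1} + X^2). For α = u + vβ with u ≠ 0: f^{-1}(α) has exactly 2 elements if 2cu is a square in F_q, and is empty otherwise. -/
/-- for f(X) = c(X^{q+1} + X^2) and α = u + vβ with u ≠ 0, the
preimage f^{-1}(α) has exactly 2 elements if 2cu is a square in F_q, and is empty
otherwise. -/
theorem stmt_15 (q : ℕ) (hq : Odd q) (K : Type*) [Field K] [Fintype K]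
    (hK : Fintype.card K = q ^ 2)
    (β : K) (hbF : (β ^ 2) ^ q = β ^ 2)
    (hbns : ¬ ∃ t : K, t ^ q = t ∧ t ^ 2 = β ^ 2)
    (c : K) (hcF : c ^ q = c) (hc0 : c ≠ 0)
    (u v : K) (hu : u ^ q = u) (hv : v ^ q = v) (hu0 : u ≠ 0) :
    ((∃ t : K, t ^ q = t ∧ t ^ 2 = 2 * c * u) →
      Set.ncard {x : K | c * (x ^ (q + 1) + x ^ 2) = u + v * β} = 2) ∧
    ((¬ ∃ t : K, t ^ q = t ∧ t ^ 2 = 2 * c * u) →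
      {x : K | c * (x ^ (q + 1) + x ^ 2) = u + v * β} = ∅) := by
  have hq0 : q ≠ 0 := hq.pos.ne'
  -- characteristic facts
  obtain ⟨p, hcp⟩ := CharP.exists K
  obtain ⟨n, hp, hcard⟩ := FiniteField.card K p
  haveI : Fact p.Prime := ⟨hp⟩
  have hq1 : 1 < q := by
    by_contra h
    interval_cases q
    · exact hq0 rfl
    · simp at hK
      have := Fintype.one_lt_card (α := K)
      omega
  have hqdvd : q ∣ p ^ (n : ℕ) := by
    have : q ∣ Fintype.card K := hK ▸ dvd_pow_self q two_ne_zero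
    rwa [hcard] at this
  obtain ⟨m, hmn, hqm⟩ := (Nat.dvd_prime_pow hp).mp hqdvd
  have frob : ∀ x y : K, (x + y) ^ q = x ^ q + y ^ q := by
    intro x y; rw [hqm]; exact add_pow_char_pow x y p m
  have two_q : (2 : K) ^ q = 2 := by
    simpa [one_add_one_eq_two] using frob 1 1
  have hm : m ≠ 0 := by rintro rfl; rw [pow_zero] at hqm; omega
  have hp2 : p ≠ 2 := by
    rintro rfl
    have hpq : (2:ℕ) ∣ q := hqm ▸ dvd_pow_self 2 hm
    have h1 := Nat.odd_iff.mp hq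
    omega
  have two0 : (2 : K) ≠ 0 := by
    have hnd : ¬ (p ∣ 2) := by
      intro h
      exact hp2 ((Nat.prime_dvd_prime_iff_eq hp Nat.prime_two).mp h)
    simpa using (not_iff_not.mpr (CharP.cast_eq_zero_iff K p 2)).mpr hnd
  have pow_card : ∀ x : K, x ^ q ^ 2 = x := by
    intro x; rw [← hK]; exact FiniteField.pow_card x
  have b0 : β ≠ 0 := by
    rintro rfl
    exact hbns ⟨0, by simp [hq0], by simp⟩
  have bq : β ^ q = -β := by
    have h : (β ^ q - β) * (β ^ q + β) = 0 := by
      have : (β ^ q) ^ 2 = β ^ 2 := by rw [← pow_mul, mul_comm, pow_mul, hbF]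
      linear_combination this
    rcases mul_eq_zero.mp h with h | h
    · exact absurd ⟨β, sub_eq_zero.mp h, rfl⟩ hbns
    · exact eq_neg_of_add_eq_zero_left h
  have hxq : ∀ x : K, (x ^ q) ^ q = x := by
    intro x; rw [← pow_mul, ← pow_two, pow_card]
  -- the key "trace" equation
  have key : ∀ x : K, c * (x ^ (q + 1) + x ^ 2) = u + v * β →
      c * (x ^ q + x) ^ 2 = 2 * u := by
    intro x hx
    have h1 : (c * (x ^ (q + 1) + x ^ 2)) ^ q = (u + v * β) ^ q := by rw [hx]
    have e1 : (x ^ (q + 1)) ^ q = x * x ^ q := by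
      rw [← pow_mul, show (q + 1) * q = q ^ 2 + q by ring, pow_add, pow_card]
    have e2 : (x ^ 2) ^ q = (x ^ q) ^ 2 := by
      rw [← pow_mul, mul_comm, pow_mul]
    have h2 : c * (x * x ^ q + (x ^ q) ^ 2) = u - v * β := by
      rw [mul_pow, frob, hcF, e1, e2, frob, hu, mul_pow, hv, bq] at h1
      linear_combination h1
    have hx' : c * (x ^ q * x + x ^ 2) = u + v * β := by rw [← pow_succ]; exact hx
    linear_combination hx' + h2
  have tprop : ∀ x : K, c * (x ^ (q + 1) + x ^ 2) = u + v * β →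
      (c * (x ^ q + x)) ^ q = c * (x ^ q + x) ∧ (c * (x ^ q + x)) ^ 2 = 2 * c * u := by
    intro x hx
    constructor
    · rw [mul_pow, hcF, frob, hxq]; ring
    · linear_combination c * key x hx
  constructor
  · rintro ⟨t, ht1, ht2⟩
    have ht0 : t ≠ 0 := by
      rintro rfl
      have : (2 : K) * c * u = 0 := by rw [← ht2]; ring
      rcases mul_eq_zero.mp this with h | h
      · rcases mul_eq_zero.mp h with h | h
        · exact two0 h
        · exact hc0 h
      · exact hu0 h
    set x₀ : K := t / (2 * c) + v / t * β with hx₀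
    have hx₀q : x₀ ^ q = t / (2 * c) - v / t * β := by
      rw [hx₀, frob]
      simp only [div_pow, mul_pow]
      rw [ht1, two_q, hcF, hv, bq]
      ring
    have hB : t * (v / t) = v := by field_simp
    have hC : t * (t / (2 * c)) = u := by
      field_simp
      linear_combination ht2
    have hD : 2 * c * (t / (2 * c)) ^ 2 = u := by
      field_simp
      linear_combination ht2
    have hE : 2 * c * (t / (2 * c)) * (v / t) = v := by
      field_simp
    have h2 : t * x₀ = u + v * β := by
      rw [hx₀, mul_add, ← mul_assoc, hB, hC]
    have hfx₀ : c * (x₀ ^ (q + 1) + x₀ ^ 2) = u + v * β := by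
      rw [pow_succ, hx₀q, hx₀]
      linear_combination hD + β * hE
    have hne : x₀ ≠ -x₀ := by
      intro h
      have hx00 : x₀ = 0 := by
        have : (2 : K) * x₀ = 0 := by linear_combination h
        rcases mul_eq_zero.mp this with h' | h'
        · exact absurd h' two0
        · exact h'
      rw [hx00, mul_zero] at h2
      have h3 : ((0:K)) ^ q = (u + v * β) ^ q := by rw [← h2]
      rw [zero_pow hq0, frob, hu, mul_pow, hv, bq] at h3
      have h4 : u = 0 := by
        have h5 : (2 : K) * u = 0 := by linear_combination -h2 - h3
        rcases mul_eq_zero.mp h5 with h' | h'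
        · exact absurd h' two0
        · exact h'
      exact hu0 h4
    have hset : {x : K | c * (x ^ (q + 1) + x ^ 2) = u + v * β} = {x₀, -x₀} := by
      ext x
      simp only [Set.mem_setOf_eq, Set.mem_insert_iff, Set.mem_singleton_iff]
      constructor
      · intro hx
        have hkey := key x hx
        have hfac : (c * (x ^ q + x) - t) * (c * (x ^ q + x) + t) = 0 := by
          linear_combination c * hkey - ht2
        have hx' : c * (x ^ q * x + x ^ 2) = u + v * β := by rw [← pow_succ]; exact hx
        rcases mul_eq_zero.mp hfac with h | h
        · left
          have hxt : c * (x ^ q + x) = t := by linear_combination h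
          have h1 : x * t = u + v * β := by linear_combination hx' - x * hxt
          have : x * t = x₀ * t := by rw [h1, ← h2]; ring
          exact mul_right_cancel₀ ht0 this
        · right
          have hxt : c * (x ^ q + x) = -t := by linear_combination h
          have h1 : x * (-t) = u + v * β := by linear_combination hx' - x * hxt
          have : x * t = (-x₀) * t := by
            have h6 := h1.trans h2.symm
            linear_combination -h6
          exact mul_right_cancel₀ ht0 this
      · rintro (rfl | rfl)
        · exact hfx₀
        · have he : Even (q + 1) := hq.add_one
          rw [he.neg_pow, neg_sq]
          exact hfx₀
    rw [hset]
    exact Set.ncard_pair hne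
  · intro hne
    ext x
    simp only [Set.mem_setOf_eq, Set.mem_empty_iff_false, iff_false]
    intro hx
    exact hne ⟨c * (x ^ q + x), (tprop x hx).1, (tprop x hx).2⟩
end

section
/- Let q be odd, a ∈ F_q^* with a ≠ ±1, and f(X) = X^{q+1} + aX^2 on F_{q^2}. Then the only fixed points of f are 0 and 1/(a+1), and f^{-1}(0) = {0}. -/
/-- for f(X) = X^{q+1} + aX^2 with a ∈ F_q^*, a ≠ ±1, the only
fixed points are 0 and 1/(a+1), and f^{-1}(0) = {0}. -/
theorem stmt_16 (q : ℕ) (hq : Odd q) (K : Type*) [Field K] [Fintype K]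
    (hK : Fintype.card K = q ^ 2)
    (a : K) (haF : a ^ q = a) (ha0 : a ≠ 0) (ha1 : a ≠ 1) (ha2 : a ≠ -1) :
    {α : K | α ^ (q + 1) + a * α ^ 2 = α} = {0, (a + 1)⁻¹} ∧
    {γ : K | γ ^ (q + 1) + a * γ ^ 2 = 0} = {0} := by
  obtain ⟨p, hp⟩ := CharP.exists K
  have hp' : p.Prime := CharP.char_is_prime K p
  haveI : Fact p.Prime := ⟨hp'⟩
  obtain ⟨n, -, hn⟩ := FiniteField.card K p
  obtain ⟨k, -, hk⟩ : ∃ k, k ≤ (n : ℕ) ∧ q = p ^ k := by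
    refine (Nat.dvd_prime_pow hp').mp ?_
    rw [← hn, hK]
    exact Dvd.intro q (by ring)
  have hfrob : ∀ x y : K, (x + y) ^ q = x ^ q + y ^ q := by
    intro x y; rw [hk]; exact add_pow_char_pow x y p k
  have hpowcard : ∀ x : K, x ^ q ^ 2 = x := by
    intro x; rw [← hK]; exact FiniteField.pow_card x
  have ha1' : a + 1 ≠ 0 := fun h => ha2 (by linear_combination h)
  constructor
  · ext α
    simp only [Set.mem_setOf_eq, Set.mem_insert_iff, Set.mem_singleton_iff]
    constructor
    · intro h
      by_cases h0 : α = 0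
      · exact Or.inl h0
      · right
        have hps : α ^ (q + 1) = α ^ q * α := pow_succ α q
        have h1 : α * (α ^ q + a * α - 1) = 0 := by
          rw [hps] at h; linear_combination h
        have h2 : α ^ q + a * α - 1 = 0 := (mul_eq_zero.mp h1).resolve_left h0
        have heq : α ^ q = 1 - a * α := by linear_combination h2
        have h3 : α = 1 - a + a ^ 2 * α := by
          have hc := hpowcard α
          have hpq : α ^ q ^ 2 = (α ^ q) ^ q := by rw [← pow_mul, sq]
          rw [hpq, heq] at hc
          have hf : (1 - a * α) ^ q = 1 - a * α ^ q := by
            rw [sub_eq_add_neg, hfrob, one_pow, Odd.neg_pow hq, mul_pow, haF,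
              ← sub_eq_add_neg]
          rw [hf, heq] at hc
          linear_combination -hc
        have h4 : (1 - a) * (α * (a + 1) - 1) = 0 := by linear_combination h3
        have h5 : α * (a + 1) = 1 := by
          rcases mul_eq_zero.mp h4 with h6 | h6
          · exact absurd (by linear_combination -h6) ha1
          · linear_combination h6
        exact eq_inv_of_mul_eq_one_left h5
    · rintro (rfl | rfl)
      · rw [zero_pow (Nat.succ_ne_zero q)]; ring
      · have hinv : ((a + 1)⁻¹ : K) ^ q = (a + 1)⁻¹ := by
          rw [inv_pow, hfrob, haF, one_pow]
        rw [pow_succ, hinv]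
        field_simp
        ring
  · ext γ
    simp only [Set.mem_setOf_eq, Set.mem_singleton_iff]
    constructor
    · intro h
      by_contra h0
      have heq : γ ^ (q + 1) = -(a * γ ^ 2) := by linear_combination h
      have hgq : (γ ^ (q + 1)) ^ q = γ * γ ^ q := by
        rw [← pow_mul]
        have he : (q + 1) * q = q ^ 2 + q := by ring
        rw [he, pow_add, hpowcard]
      have h1 : γ * γ ^ q = -(a * (γ ^ q) ^ 2) := by
        have h2 : (γ ^ (q + 1)) ^ q = (-(a * γ ^ 2)) ^ q := by rw [heq]
        rw [hgq, Odd.neg_pow hq, mul_pow, haF, ← pow_mul, mul_comm 2 q, pow_mul] at h2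
        exact h2
      have h3 : γ ^ (q + 1) = γ * γ ^ q := by rw [pow_succ]; ring
      have h4 : a * ((γ ^ q) ^ 2 - γ ^ 2) = 0 := by linear_combination -heq + h3 + h1
      have h5 : (γ ^ q - γ) * (γ ^ q + γ) = 0 := by
        have h6 := (mul_eq_zero.mp h4).resolve_left ha0
        linear_combination h6
      rcases mul_eq_zero.mp h5 with h6 | h6
      · have h7 : γ ^ q = γ := by linear_combination h6
        rw [pow_succ, h7] at h
        have h8 : γ ^ 2 * (1 + a) = 0 := by linear_combination h
        rcases mul_eq_zero.mp h8 with h9 | h9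
        · exact h0 (sq_eq_zero_iff.mp h9)
        · exact ha2 (by linear_combination h9)
      · have h7 : γ ^ q = -γ := by linear_combination h6
        rw [pow_succ, h7] at h
        have h8 : γ ^ 2 * (a - 1) = 0 := by linear_combination h
        rcases mul_eq_zero.mp h8 with h9 | h9
        · exact h0 (sq_eq_zero_iff.mp h9)
        · exact ha1 (by linear_combination h9)
    · rintro rfl
      rw [zero_pow (Nat.succ_ne_zero q)]; ring
end

section
/- Let q be odd, a ∈ F_q^* with a ≠ ±1, and f(X) = X^{q+1} + aX^2 on F_{q^2}. For α ∈ F_q^*: f^{-1}(α) has 0 elements if α(a-1) is a square and α(a+1) is a nonsquare in F_q; 4 elements if α(a-1) is a nonsquare and α(a+1) is a square; and 2 elements otherwise. -/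
private lemma sq_split {K : Type*} [Field K] {c x y : K} (hx : x ^ 2 = c) (hy : y ^ 2 = c) :
    y = x ∨ y = -x := by
  have h : (y - x) * (y + x) = 0 := by linear_combination hy - hx
  rcases mul_eq_zero.mp h with h | h
  · exact Or.inl (sub_eq_zero.mp h)
  · exact Or.inr (eq_neg_of_add_eq_zero_left h)

/-- for f(X) = X^{q+1} + aX^2, a ∈ F_q^* \ {±1}, and α ∈ F_q^*, the
preimage f^{-1}(α) has 0 elements if α(a-1) is a square and α(a+1) a nonsquare in
F_q; 4 elements if α(a-1) is a nonsquare and α(a+1) a square; and 2 otherwise. -/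
theorem stmt_18 (q : ℕ) (hq : Odd q) (K : Type*) [Field K] [Fintype K]
    (hK : Fintype.card K = q ^ 2)
    (a : K) (haF : a ^ q = a) (ha0 : a ≠ 0) (ha1 : a ≠ 1) (ha2 : a ≠ -1)
    (α : K) (hαF : α ^ q = α) (hα0 : α ≠ 0) :
    (((∃ t : K, t ^ q = t ∧ t ^ 2 = α * (a - 1)) ∧
        ¬ (∃ t : K, t ^ q = t ∧ t ^ 2 = α * (a + 1))) →
      Set.ncard {x : K | x ^ (q + 1) + a * x ^ 2 = α} = 0) ∧
    ((¬ (∃ t : K, t ^ q = t ∧ t ^ 2 = α * (a - 1)) ∧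
        (∃ t : K, t ^ q = t ∧ t ^ 2 = α * (a + 1))) →
      Set.ncard {x : K | x ^ (q + 1) + a * x ^ 2 = α} = 4) ∧
    ((((∃ t : K, t ^ q = t ∧ t ^ 2 = α * (a - 1)) ↔
        (∃ t : K, t ^ q = t ∧ t ^ 2 = α * (a + 1)))) →
      Set.ncard {x : K | x ^ (q + 1) + a * x ^ 2 = α} = 2) := by
  obtain ⟨r, hr⟩ := hq
  -- characteristic ≠ 2
  have hchar : ringChar K ≠ 2 := by
    intro h
    have h' := FiniteField.even_card_iff_char_two.mp h
    rw [hK] at h'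
    have hq2 : q ^ 2 = 2 * (2 * r ^ 2 + 2 * r) + 1 := by rw [hr]; ring
    omega
  have h2 : (2 : K) ≠ 0 := Ring.two_ne_zero hchar
  have hneg : ∀ x : K, (-x) ^ q = -x ^ q := fun x => Odd.neg_pow ⟨r, hr⟩ x
  -- Frobenius is additive
  have hmap_add : ∀ x y : K, (x + y) ^ q = x ^ q + y ^ q := by
    set p := ringChar K with hp
    haveI : CharP K p := ringChar.charP K
    obtain ⟨n, hpprime, hcard⟩ := FiniteField.card K p
    haveI : Fact p.Prime := ⟨hpprime⟩
    have hqdvd : q ∣ p ^ (n : ℕ) := by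
      rw [← hcard, hK]
      exact dvd_pow_self q two_ne_zero
    obtain ⟨m, hm, hqm⟩ := (Nat.dvd_prime_pow hpprime).mp hqdvd
    intro x y
    rw [hqm]
    exact add_pow_char_pow x y p m
  have hs1 : (a + 1) ≠ 0 := fun h => ha2 (eq_neg_of_add_eq_zero_left h)
  have hs2 : (a - 1) ≠ 0 := sub_ne_zero.mpr ha1
  have hs1F : (a + 1) ^ q = a + 1 := by rw [hmap_add, haF, one_pow]
  have hs2F : (a - 1) ^ q = a - 1 := by
    have := hmap_add a (-1)
    rw [hneg 1, one_pow] at this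
    rw [sub_eq_add_neg, this, haF]
  set c₁ := α / (a + 1) with hc₁
  set c₂ := α / (a - 1) with hc₂
  have hc₁0 : c₁ ≠ 0 := div_ne_zero hα0 hs1
  have hc₂0 : c₂ ≠ 0 := div_ne_zero hα0 hs2
  have hc₁F : c₁ ^ q = c₁ := by rw [hc₁, div_pow, hαF, hs1F]
  have hc₂F : c₂ ^ q = c₂ := by rw [hc₂, div_pow, hαF, hs2F]
  have habs : ∀ y : K, y = -y → y = 0 := by
    intro y h
    have h2y : (2 : K) * y = 0 := by linear_combination h
    rcases mul_eq_zero.mp h2y with h' | h'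
    · exact absurd h' h2
    · exact h'
  -- the key counting fact for square roots of a fixed element of F_q
  have key : ∀ c : K, c ≠ 0 → c ^ q = c →
      ((∃ t : K, t ^ q = t ∧ t ^ 2 = c) →
        ({y : K | y ^ q = y ∧ y ^ 2 = c}.ncard = 2 ∧
         {y : K | y ^ q = -y ∧ y ^ 2 = c} = ∅)) ∧
      ((¬ ∃ t : K, t ^ q = t ∧ t ^ 2 = c) →
        ({y : K | y ^ q = y ∧ y ^ 2 = c} = ∅ ∧
         {y : K | y ^ q = -y ∧ y ^ 2 = c}.ncard = 2)) := by
    intro c hc0 hcF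
    -- c is a square in K
    have hsq : IsSquare c := by
      rw [FiniteField.isSquare_iff hchar hc0, hK]
      have hcr : c ^ (2 * r) = 1 := by
        have : c ^ (2 * r) * c = c := by
          rw [← pow_succ, ← hr, hcF]
        field_simp at this
        exact this
      have hdiv : q ^ 2 / 2 = (2 * r) * (r + 1) := by
        have : q ^ 2 = 2 * ((2 * r) * (r + 1)) + 1 := by rw [hr]; ring
        omega
      rw [hdiv, pow_mul, hcr, one_pow]
    obtain ⟨x, hxx⟩ := hsq
    have hx2 : x ^ 2 = c := by rw [sq]; exact hxx.symm
    have hx0 : x ≠ 0 := fun h => hc0 (by rw [← hx2, h]; ring)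
    have hxne : x ≠ -x := fun h => hx0 (by
      have : (2 : K) * x = 0 := by linear_combination h
      rcases mul_eq_zero.mp this with h' | h'
      · exact absurd h' h2
      · exact h')
    have hxq : x ^ q = x ∨ x ^ q = -x := by
      apply sq_split hx2
      rw [pow_right_comm, hx2, hcF]
    have hmx2 : (-x) ^ 2 = c := by rw [neg_pow, hx2]; ring
    rcases hxq with hxq | hxq
    · constructor
      · intro _
        constructor
        · have hset : {y : K | y ^ q = y ∧ y ^ 2 = c} = {x, -x} := by
            ext y
            simp only [Set.mem_setOf_eq, Set.mem_insert_iff, Set.mem_singleton_iff]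
            constructor
            · rintro ⟨_, hy2⟩; exact sq_split hx2 hy2
            · rintro (rfl | rfl)
              · exact ⟨hxq, hx2⟩
              · exact ⟨by rw [hneg, hxq], hmx2⟩
          rw [hset]
          exact Set.ncard_pair hxne
        · ext y
          simp only [Set.mem_setOf_eq, Set.mem_empty_iff_false, iff_false, not_and]
          intro hyq hy2
          rcases sq_split hx2 hy2 with rfl | rfl
          · exact hx0 (habs _ (by linear_combination hyq - hxq))
          · rw [hneg, hxq] at hyq
            exact hx0 (neg_eq_zero.mp (habs _ hyq))
      · intro h
        exact absurd ⟨x, hxq, hx2⟩ h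
    · have hnsq : ¬ ∃ t : K, t ^ q = t ∧ t ^ 2 = c := by
        rintro ⟨t, htq, ht2⟩
        rcases sq_split hx2 ht2 with rfl | rfl
        · exact hx0 (habs _ (by linear_combination hxq - htq))
        · rw [hneg, hxq, neg_neg] at htq
          exact hx0 (habs _ htq)
      constructor
      · intro h; exact absurd h hnsq
      · intro _
        constructor
        · ext y
          simp only [Set.mem_setOf_eq, Set.mem_empty_iff_false, iff_false, not_and]
          intro hyq hy2
          exact hnsq ⟨y, hyq, hy2⟩
        · have hset : {y : K | y ^ q = -y ∧ y ^ 2 = c} = {x, -x} := by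
            ext y
            simp only [Set.mem_setOf_eq, Set.mem_insert_iff, Set.mem_singleton_iff]
            constructor
            · rintro ⟨_, hy2⟩; exact sq_split hx2 hy2
            · rintro (rfl | rfl)
              · exact ⟨hxq, hx2⟩
              · exact ⟨by rw [hneg, hxq, neg_neg], hmx2⟩
          rw [hset]
          exact Set.ncard_pair hxne
  -- the decomposition of the solution set
  have hdecomp : {x : K | x ^ (q + 1) + a * x ^ 2 = α} =
      {y : K | y ^ q = y ∧ y ^ 2 = c₁} ∪ {y : K | y ^ q = -y ∧ y ^ 2 = c₂} := by
    ext x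
    simp only [Set.mem_setOf_eq, Set.mem_union]
    constructor
    · intro h
      have hfrob : x ^ (q + 1) + a * (x ^ q) ^ 2 = α := by
        have h' := congrArg (· ^ q) h
        rw [hmap_add, hαF] at h'
        have e1 : (x ^ (q + 1)) ^ q = x ^ (q + 1) := by
          rw [← pow_mul]
          have : (q + 1) * q = q ^ 2 + q := by ring
          rw [this, pow_add, ← hK, FiniteField.pow_card, ← pow_succ']
        have e2 : (a * x ^ 2) ^ q = a * (x ^ q) ^ 2 := by
          rw [mul_pow, haF, pow_right_comm]
        rw [e1, e2] at h'
        exact h'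
      have hcases : x ^ q = x ∨ x ^ q = -x := by
        have hdiff : a * (x ^ 2 - (x ^ q) ^ 2) = 0 := by linear_combination h - hfrob
        rcases mul_eq_zero.mp hdiff with h' | h'
        · exact absurd h' ha0
        · have : (x ^ q) ^ 2 = x ^ 2 := by linear_combination -h'
          exact sq_split rfl this
      have hpow : x ^ (q + 1) = x ^ q * x := by rw [pow_succ]
      rcases hcases with hxq | hxq
      · left
        refine ⟨hxq, ?_⟩
        rw [hc₁, eq_div_iff hs1]
        rw [hpow, hxq] at h
        linear_combination h
      · right
        refine ⟨hxq, ?_⟩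
        rw [hc₂, eq_div_iff hs2]
        rw [hpow, hxq] at h
        linear_combination h
    · rintro (⟨hxq, hx2⟩ | ⟨hxq, hx2⟩)
      · have hx2' : x ^ 2 * (a + 1) = α := by
          rw [hx2, hc₁]; field_simp
        rw [pow_succ, hxq]
        linear_combination hx2'
      · have hx2' : x ^ 2 * (a - 1) = α := by
          rw [hx2, hc₂]; field_simp
        rw [pow_succ, hxq]
        linear_combination hx2'
  have hdisj : Disjoint {y : K | y ^ q = y ∧ y ^ 2 = c₁} {y : K | y ^ q = -y ∧ y ^ 2 = c₂} := by
    rw [Set.disjoint_left]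
    rintro y ⟨hy1, hy2⟩ ⟨hy3, hy4⟩
    have hy0 : y = 0 := habs y (by linear_combination hy3 - hy1)
    apply hc₁0
    rw [← hy2, hy0]; ring
  have hcount : {x : K | x ^ (q + 1) + a * x ^ 2 = α}.ncard =
      {y : K | y ^ q = y ∧ y ^ 2 = c₁}.ncard + {y : K | y ^ q = -y ∧ y ^ 2 = c₂}.ncard := by
    rw [hdecomp, Set.ncard_union_eq hdisj (Set.toFinite _) (Set.toFinite _)]
  -- translation between α * s and α / s squareness
  have htrans : ∀ s : K, s ≠ 0 → s ^ q = s →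
      ((∃ t : K, t ^ q = t ∧ t ^ 2 = α * s) ↔ (∃ t : K, t ^ q = t ∧ t ^ 2 = α / s)) := by
    intro s hs hsF
    constructor
    · rintro ⟨t, htq, ht2⟩
      refine ⟨t / s, by rw [div_pow, htq, hsF], ?_⟩
      rw [div_pow, ht2]
      field_simp
    · rintro ⟨t, htq, ht2⟩
      refine ⟨t * s, by rw [mul_pow, htq, hsF], ?_⟩
      rw [mul_pow, ht2]
      field_simp
  have htr1 := htrans (a - 1) hs2 hs2F
  have htr2 := htrans (a + 1) hs1 hs1F
  have key1 := key c₁ hc₁0 hc₁F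
  have key2 := key c₂ hc₂0 hc₂F
  refine ⟨?_, ?_, ?_⟩
  · rintro ⟨hA, hB⟩
    rw [htr1] at hA
    rw [htr2] at hB
    obtain ⟨hA1, hA2⟩ := key2.1 hA
    obtain ⟨hB1, hB2⟩ := key1.2 hB
    rw [hcount, hB1, hA2, Set.ncard_empty]
  · rintro ⟨hA, hB⟩
    rw [htr1] at hA
    rw [htr2] at hB
    obtain ⟨hA1, hA2⟩ := key2.2 hA
    obtain ⟨hB1, hB2⟩ := key1.1 hB
    rw [hcount, hB1, hA2]

  · intro hiff
    rw [htr1, htr2] at hiff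
    by_cases h : ∃ t : K, t ^ q = t ∧ t ^ 2 = c₁
    · obtain ⟨hB1, hB2⟩ := key1.1 h
      obtain ⟨hA1, hA2⟩ := key2.1 (hiff.mpr h)
      rw [hcount, hB1, hA2, Set.ncard_empty]
    · obtain ⟨hB1, hB2⟩ := key1.2 h
      obtain ⟨hA1, hA2⟩ := key2.2 (fun h' => h (hiff.mp h'))
      rw [hcount, hB1, hA2, Set.ncard_empty]
end

section
/- Let q ≡ 3 (mod 4) be an odd prime power, β with β^2 = b a nonsquare in F_q, a ∈ F_q^* with a ≠ ±1, and f(X) = X^{q+1} + aX^2 on F_{q^2}. For α ∈ F_q^*, the preimage f^{-1}(αβ) has 0 elements if 1 - a^2 is a nonzero square in F_q, and exactly 2 elements if 1 - a^2 is a nonsquare in F_q. -/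
private lemma aux_sq_eq {K : Type*} [Field K] {u w : K} (h : u ^ 2 = w ^ 2) :
    u = w ∨ u = -w := by
  have h0 : (u - w) * (u + w) = 0 := by linear_combination h
  rcases mul_eq_zero.mp h0 with h' | h'
  · exact Or.inl (sub_eq_zero.mp h')
  · exact Or.inr (eq_neg_of_add_eq_zero_left h')

private lemma aux_sq_mul {K : Type*} [Field K] [Fintype K] (q : ℕ) (hq0 : q ≠ 0)
    (hodd : Odd q) (h2 : (2 : K) ≠ 0)
    (hFr : ∀ x y : K, (x + y) ^ q = x ^ q + y ^ q)
    {x y : K} (hx : x ^ q = x) (hy : y ^ q = y) (hx0 : x ≠ 0) (hy0 : y ≠ 0)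
    (hxs : ¬ ∃ t : K, t ^ q = t ∧ t ^ 2 = x) (hys : ¬ ∃ t : K, t ^ q = t ∧ t ^ 2 = y) :
    ∃ t : K, t ^ q = t ∧ t ^ 2 = x * y := by
  classical
  let F : Subfield K :=
    { carrier := {z : K | z ^ q = z}
      one_mem' := one_pow q
      mul_mem' := fun {u v} hu hv => by
        simp only [Set.mem_setOf_eq] at *; rw [mul_pow, hu, hv]
      zero_mem' := zero_pow hq0
      add_mem' := fun {u v} hu hv => by
        simp only [Set.mem_setOf_eq] at *; rw [hFr, hu, hv]
      neg_mem' := fun {u} hu => by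
        simp only [Set.mem_setOf_eq] at *; rw [hodd.neg_pow, hu]
      inv_mem' := fun u hu => by
        simp only [Set.mem_setOf_eq] at *; rw [inv_pow, hu] }
  have hmem : ∀ z : K, z ∈ F ↔ z ^ q = z := fun z => Iff.rfl
  haveI : Fintype F := Fintype.ofFinite F
  have hchar : ringChar F ≠ 2 := by
    intro h
    have h20 : ((2 : ℕ) : F) = 0 := by
      haveI := ringChar.charP F
      rw [← h]
      exact CharP.cast_eq_zero F (ringChar F)
    have h20' : ((1 : F) + 1) = 0 := by
      have : ((2 : ℕ) : F) = ((1 : F) + 1) := by push_cast; ring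
      rw [← this]; exact h20
    have hK2 : ((1 : K) + 1) = 0 := by
      have h2K := congrArg (fun z : F => (z : K)) h20'
      simpa using h2K
    exact h2 (by rw [← one_add_one_eq_two]; exact hK2)
  set x' : F := ⟨x, hx⟩ with hx'def
  set y' : F := ⟨y, hy⟩ with hy'def
  have hx0' : x' ≠ 0 := fun h => hx0 (congrArg Subtype.val h)
  have hy0' : y' ≠ 0 := fun h => hy0 (congrArg Subtype.val h)
  set m := Fintype.card F / 2 with hm
  have hxm : x' ^ m = -1 := by
    rcases FiniteField.pow_dichotomy hchar hx0' with h | h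
    · exfalso
      obtain ⟨s, hs⟩ := (FiniteField.isSquare_iff hchar hx0').mpr h
      exact hxs ⟨(s : K), s.2, by
        have := congrArg Subtype.val hs
        rw [sq]; push_cast at this; exact this.symm⟩
    · exact h
  have hym : y' ^ m = -1 := by
    rcases FiniteField.pow_dichotomy hchar hy0' with h | h
    · exfalso
      obtain ⟨s, hs⟩ := (FiniteField.isSquare_iff hchar hy0').mpr h
      exact hys ⟨(s : K), s.2, by
        have := congrArg Subtype.val hs
        rw [sq]; push_cast at this; exact this.symm⟩
    · exact h
  have hprod : (x' * y') ^ m = 1 := by rw [mul_pow, hxm, hym]; ring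
  obtain ⟨s, hs⟩ := (FiniteField.isSquare_iff hchar (mul_ne_zero hx0' hy0')).mpr hprod
  refine ⟨(s : K), s.2, ?_⟩
  have := congrArg Subtype.val hs
  rw [sq]; push_cast at this; exact this.symm

/-- for q ≡ 3 (mod 4), f(X) = X^{q+1} + aX^2, a ∈ F_q^* \ {±1}, and
α ∈ F_q^*, the preimage f^{-1}(αβ) is empty if 1 - a² is a (nonzero) square in
F_q, and has exactly 2 elements if 1 - a² is a nonsquare. -/
theorem stmt_19 (q : ℕ) (hq : q % 4 = 3) (K : Type*) [Field K] [Fintype K]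
    (hK : Fintype.card K = q ^ 2)
    (β : K) (hbF : (β ^ 2) ^ q = β ^ 2)
    (hbns : ¬ ∃ t : K, t ^ q = t ∧ t ^ 2 = β ^ 2)
    (a : K) (haF : a ^ q = a) (ha0 : a ≠ 0) (ha1 : a ≠ 1) (ha2 : a ≠ -1)
    (α : K) (hαF : α ^ q = α) (hα0 : α ≠ 0) :
    ((∃ t : K, t ^ q = t ∧ t ^ 2 = 1 - a ^ 2) →
      {x : K | x ^ (q + 1) + a * x ^ 2 = α * β} = ∅) ∧
    ((¬ ∃ t : K, t ^ q = t ∧ t ^ 2 = 1 - a ^ 2) →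
      Set.ncard {x : K | x ^ (q + 1) + a * x ^ 2 = α * β} = 2) := by
  classical
  have hq0 : q ≠ 0 := by omega
  have hqodd : Odd q := by
    have h24 := Nat.mod_mod_of_dvd q (by norm_num : (2:ℕ) ∣ 4)
    rw [Nat.odd_iff]; omega
  -- q = 0 in K
  have hqK : (q : K) = 0 := by
    have hc := Nat.cast_card_eq_zero K
    rw [hK] at hc
    push_cast at hc
    exact pow_eq_zero_iff (n := 2) (by norm_num) |>.mp hc
  -- 2 ≠ 0 in K
  have h2 : (2 : K) ≠ 0 := by
    intro h2
    haveI := ringChar.charP K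
    have hd2 : ringChar K ∣ 2 := (CharP.cast_eq_zero_iff K (ringChar K) 2).mp (by exact_mod_cast h2)
    have hdq : ringChar K ∣ q := (CharP.cast_eq_zero_iff K (ringChar K) q).mp hqK
    rcases (Nat.prime_two.eq_one_or_self_of_dvd _ hd2) with h1 | hring
    · have : ((1 : ℕ) : K) = 0 := (CharP.cast_eq_zero_iff K (ringChar K) 1).mpr (h1 ▸ dvd_refl _)
      simp at this
    · rw [hring] at hdq
      obtain ⟨c, hc⟩ := hdq
      omega
  -- Frobenius additivity
  have hFr : ∀ x y : K, (x + y) ^ q = x ^ q + y ^ q := by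
    obtain ⟨p, hp⟩ := CharP.exists K
    haveI := hp
    have hpp : p.Prime := CharP.char_is_prime K p
    haveI : Fact p.Prime := ⟨hpp⟩
    obtain ⟨n, hpp', hcard⟩ := FiniteField.card K p
    have hqdvd : q ∣ p ^ (n : ℕ) := by
      rw [← hcard, hK]
      exact Dvd.intro q (by ring)
    obtain ⟨k, hk, hqpk⟩ := (Nat.dvd_prime_pow hpp).mp hqdvd
    intro x y
    rw [hqpk]
    exact add_pow_char_pow x y p k
  -- helper closure facts
  have hSubRaw : ∀ x y : K, (x - y) ^ q = x ^ q - y ^ q := by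
    intro x y
    rw [sub_eq_add_neg, hFr, hqodd.neg_pow, sub_eq_add_neg]
  have hFmul : ∀ x y : K, x ^ q = x → y ^ q = y → (x * y) ^ q = x * y := by
    intro x y hx hy; rw [mul_pow, hx, hy]
  have hFadd : ∀ x y : K, x ^ q = x → y ^ q = y → (x + y) ^ q = x + y := by
    intro x y hx hy; rw [hFr, hx, hy]
  have hFsub : ∀ x y : K, x ^ q = x → y ^ q = y → (x - y) ^ q = x - y := by
    intro x y hx hy; rw [hSubRaw, hx, hy]
  have hFone : (1 : K) ^ q = 1 := one_pow q
  have hFsq : ∀ x : K, x ^ q = x → (x ^ 2) ^ q = x ^ 2 := by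
    intro x hx; rw [← pow_mul, mul_comm, pow_mul, hx]
  have hFdiv : ∀ x y : K, x ^ q = x → y ^ q = y → (x / y) ^ q = x / y := by
    intro x y hx hy; rw [div_pow, hx, hy]
  have hFneg : ∀ x : K, x ^ q = x → (-x) ^ q = -x := by
    intro x hx; rw [hqodd.neg_pow, hx]
  have hF2 : (2 : K) ^ q = 2 := by
    rw [← one_add_one_eq_two]; exact hFadd 1 1 hFone hFone
  have hxq2 : ∀ x : K, (x ^ q) ^ q = x := by
    intro x
    rw [← pow_mul]
    have hqq : q * q = Fintype.card K := by rw [hK]; ring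
    rw [hqq, FiniteField.pow_card]
  -- β facts
  have hβ0 : β ≠ 0 := by
    intro h
    exact hbns ⟨0, zero_pow hq0, by rw [h]⟩
  have hβq : β ^ q = -β := by
    have h1 : (β ^ q) ^ 2 = β ^ 2 := by rw [← pow_mul, mul_comm, pow_mul, hbF]
    rcases aux_sq_eq h1 with h | h
    · exact absurd ⟨β, h, rfl⟩ hbns
    · exact h
  -- no square root of -1 in F
  have keyB : ¬ ∃ s : K, s ^ q = s ∧ s ^ 2 = -1 := by
    rintro ⟨s, hsF, hs2⟩
    have hs0 : s ≠ 0 := by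
      intro h
      rw [h] at hs2
      exact h2 (by linear_combination 2 * hs2)
    have hs1 : s ^ (q - 1) = 1 := by
      have hss : s ^ (q - 1) * s = 1 * s := by
        rw [one_mul, ← pow_succ]
        have hq1 : q - 1 + 1 = q := by omega
        rw [hq1, hsF]
      exact mul_right_cancel₀ hs0 hss
    obtain ⟨k, hk⟩ : ∃ k, q - 1 = 4 * k + 2 := ⟨(q - 3) / 4, by omega⟩
    have h4 : s ^ 4 = 1 := by
      have : s ^ 4 = (s ^ 2) ^ 2 := by ring
      rw [this, hs2]; ring
    have hs2' : s ^ 2 = 1 := by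
      calc s ^ 2 = (s ^ 4) ^ k * s ^ 2 := by rw [h4]; ring
        _ = s ^ (4 * k + 2) := by rw [← pow_mul, ← pow_add]
        _ = 1 := by rw [← hk]; exact hs1
    rw [hs2] at hs2'
    exact h2 (by linear_combination -hs2')
  -- coordinates
  have coords : ∀ x : K, ∃ u v : K, u ^ q = u ∧ v ^ q = v ∧ x = u + v * β := by
    intro x
    refine ⟨(x + x ^ q) / 2, (x - x ^ q) / (2 * β), ?_, ?_, ?_⟩
    · rw [div_pow, hFr, hxq2, hF2, add_comm (x ^ q) x]
    · rw [div_pow, hSubRaw, hxq2, mul_pow, hF2, hβq]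
      field_simp
      ring
    · field_simp
      ring
  -- independence of 1, β over F
  have indep : ∀ A C : K, A ^ q = A → C ^ q = C → A + C * β = 0 → A = 0 ∧ C = 0 := by
    intro A C hA hC h
    by_cases hC0 : C = 0
    · refine ⟨?_, hC0⟩
      rw [hC0] at h; simpa using h
    · exfalso
      apply hbns
      refine ⟨A / C, hFdiv _ _ hA hC, ?_⟩
      have hAC : A / C = -β := by
        rw [div_eq_iff hC0]
        linear_combination h
      rw [hAC]; ring
  -- membership characterization
  have memchar : ∀ u v : K, u ^ q = u → v ^ q = v →
      ((u + v * β) ^ (q + 1) + a * (u + v * β) ^ 2 = α * β ↔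
        ((1 + a) * u ^ 2 + (a - 1) * β ^ 2 * v ^ 2 = 0 ∧ 2 * a * u * v = α)) := by
    intro u v hu hv
    have hxq : (u + v * β) ^ q = u - v * β := by
      rw [hFr, mul_pow, hu, hv, hβq]
      ring
    have expand : (u + v * β) ^ (q + 1) + a * (u + v * β) ^ 2 =
        ((1 + a) * u ^ 2 + (a - 1) * β ^ 2 * v ^ 2) + (2 * a * u * v) * β := by
      rw [pow_succ, hxq]
      ring
    constructor
    · intro h
      have h0 : ((1 + a) * u ^ 2 + (a - 1) * β ^ 2 * v ^ 2) + (2 * a * u * v - α) * β = 0 := by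
        linear_combination h - expand
      have hA : ((1 + a) * u ^ 2 + (a - 1) * β ^ 2 * v ^ 2) ^ q
          = (1 + a) * u ^ 2 + (a - 1) * β ^ 2 * v ^ 2 := by
        apply hFadd
        · exact hFmul _ _ (hFadd 1 a hFone haF) (hFsq u hu)
        · exact hFmul _ _ (hFmul _ _ (hFsub a 1 haF hFone) hbF) (hFsq v hv)
      have hC : (2 * a * u * v - α) ^ q = 2 * a * u * v - α := by
        apply hFsub _ _ _ hαF
        exact hFmul _ _ (hFmul _ _ (hFmul 2 a hF2 haF) hu) hv
      obtain ⟨e1, e2⟩ := indep _ _ hA hC h0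
      exact ⟨e1, by linear_combination e2⟩
    · rintro ⟨e1, e2⟩
      rw [expand, e1, e2]
      ring
  have h1pa : (1 : K) + a ≠ 0 := fun h => ha2 (by linear_combination h)
  have h1ma : (1 : K) - a ≠ 0 := fun h => ha1 (by linear_combination -h)
  constructor
  · -- Part 1: 1 - a² a square ⇒ empty
    rintro ⟨t, htF, ht2⟩
    rw [Set.eq_empty_iff_forall_notMem]
    intro x hxS
    obtain ⟨u, v, hu, hv, hxuv⟩ := coords x
    rw [Set.mem_setOf_eq, hxuv] at hxS
    obtain ⟨e1, e2⟩ := (memchar u v hu hv).mp hxS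
    have hu0 : u ≠ 0 := by
      intro h; rw [h] at e2; exact hα0 (by linear_combination -e2)
    have hv0 : v ≠ 0 := by
      intro h; rw [h] at e2; exact hα0 (by linear_combination -e2)
    apply hbns
    refine ⟨t * u / ((1 - a) * v),
      hFdiv _ _ (hFmul _ _ htF hu) (hFmul _ _ (hFsub 1 a hFone haF) hv), ?_⟩
    rw [div_pow, div_eq_iff (pow_ne_zero 2 (mul_ne_zero h1ma hv0))]
    linear_combination u ^ 2 * ht2 + (1 - a) * e1
  · -- Part 2: 1 - a² a nonsquare ⇒ exactly two preimages
    intro hns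
    have h1ma2 : 1 - a ^ 2 ≠ 0 := by
      intro h
      have h' : (1 - a) * (1 + a) = 0 := by linear_combination h
      rcases mul_eq_zero.mp h' with h'' | h''
      · exact h1ma h''
      · exact h1pa h''
    have hb0 : β ^ 2 ≠ 0 := pow_ne_zero 2 hβ0
    have hFa2 : (1 - a ^ 2) ^ q = 1 - a ^ 2 := hFsub _ _ hFone (hFsq a haF)
    obtain ⟨r₁, hr₁F, hr₁2⟩ := aux_sq_mul q hq0 hqodd h2 hFr hbF hFa2 hb0 h1ma2 hbns hns
    have hr₁0 : r₁ ≠ 0 := by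
      intro h; rw [h] at hr₁2
      exact (mul_ne_zero hb0 h1ma2) (by linear_combination -hr₁2)
    have hr₀F : (r₁ / (1 + a)) ^ q = r₁ / (1 + a) := hFdiv _ _ hr₁F (hFadd 1 a hFone haF)
    have hr₀0 : r₁ / (1 + a) ≠ 0 := div_ne_zero hr₁0 h1pa
    have hr₀2 : (1 + a) * (r₁ / (1 + a)) ^ 2 = β ^ 2 * (1 - a) := by
      rw [div_pow, ← mul_div_assoc, div_eq_iff (pow_ne_zero 2 h1pa)]
      linear_combination (1 + a) * hr₁2
    have hma2 : (2 : K) * a ≠ 0 := mul_ne_zero h2 ha0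
    obtain ⟨r, hrF, hr0, hr2, v₀, hv₀F, hv₀2⟩ :
        ∃ r : K, r ^ q = r ∧ r ≠ 0 ∧ (1 + a) * r ^ 2 = β ^ 2 * (1 - a) ∧
          ∃ v : K, v ^ q = v ∧ v ^ 2 = α / (2 * a * r) := by
      by_cases hsq : ∃ t : K, t ^ q = t ∧ t ^ 2 = α / (2 * a * (r₁ / (1 + a)))
      · obtain ⟨v, hvF, hv2⟩ := hsq
        exact ⟨r₁ / (1 + a), hr₀F, hr₀0, hr₀2, v, hvF, hv2⟩
      · have he₀F : (α / (2 * a * (r₁ / (1 + a)))) ^ q = α / (2 * a * (r₁ / (1 + a))) :=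
          hFdiv _ _ hαF (hFmul _ _ (hFmul 2 a hF2 haF) hr₀F)
        have he₀0 : α / (2 * a * (r₁ / (1 + a))) ≠ 0 :=
          div_ne_zero hα0 (mul_ne_zero hma2 hr₀0)
        have hnegsq : ∃ t : K, t ^ q = t ∧ t ^ 2 = -(α / (2 * a * (r₁ / (1 + a)))) := by
          by_contra hns2
          obtain ⟨w, hwF, hw2⟩ := aux_sq_mul q hq0 hqodd h2 hFr he₀F (hFneg _ he₀F) he₀0
            (neg_ne_zero.mpr he₀0) hsq hns2
          apply keyB
          refine ⟨w / (α / (2 * a * (r₁ / (1 + a)))), hFdiv _ _ hwF he₀F, ?_⟩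
          rw [div_pow, div_eq_iff (pow_ne_zero 2 he₀0)]
          linear_combination hw2
        obtain ⟨v, hvF, hv2⟩ := hnegsq
        refine ⟨-(r₁ / (1 + a)), hFneg _ hr₀F, neg_ne_zero.mpr hr₀0,
          by linear_combination hr₀2, v, hvF, ?_⟩
        rw [hv2, mul_neg, div_neg]
    have hv₀0 : v₀ ≠ 0 := by
      intro h; rw [h] at hv₀2
      exact (div_ne_zero hα0 (mul_ne_zero hma2 hr0)) (by linear_combination -hv₀2)
    have hv₀2' : v₀ ^ 2 * (2 * a * r) = α := by
      rw [hv₀2]; field_simp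
    have he1 : (1 + a) * (r * v₀) ^ 2 + (a - 1) * β ^ 2 * v₀ ^ 2 = 0 := by
      linear_combination v₀ ^ 2 * hr2
    have he2 : 2 * a * (r * v₀) * v₀ = α := by linear_combination hv₀2'
    have hx₀S : (r * v₀ + v₀ * β) ^ (q + 1) + a * (r * v₀ + v₀ * β) ^ 2 = α * β :=
      (memchar _ _ (hFmul _ _ hrF hv₀F) hv₀F).mpr ⟨he1, he2⟩
    have hx₀S' : (-(r * v₀) + -v₀ * β) ^ (q + 1) + a * (-(r * v₀) + -v₀ * β) ^ 2 = α * β :=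
      (memchar _ _ (hFneg _ (hFmul _ _ hrF hv₀F)) (hFneg _ hv₀F)).mpr
        ⟨by linear_combination he1, by linear_combination he2⟩
    have hx₀0 : r * v₀ + v₀ * β ≠ 0 := by
      intro h
      rw [h] at hx₀S
      rw [zero_pow (by omega : q + 1 ≠ 0)] at hx₀S
      exact (mul_ne_zero hα0 hβ0) (by linear_combination -hx₀S)
    have hne : r * v₀ + v₀ * β ≠ -(r * v₀ + v₀ * β) := by
      intro h
      apply hx₀0
      have h20 : (2 : K) * (r * v₀ + v₀ * β) = 0 := by linear_combination h
      rcases mul_eq_zero.mp h20 with h' | h'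
      · exact absurd h' h2
      · exact h'
    have Seq : {x : K | x ^ (q + 1) + a * x ^ 2 = α * β}
        = {r * v₀ + v₀ * β, -(r * v₀ + v₀ * β)} := by
      ext x
      simp only [Set.mem_setOf_eq, Set.mem_insert_iff, Set.mem_singleton_iff]
      constructor
      · intro hxS
        obtain ⟨u, v, hu, hv, hxuv⟩ := coords x
        rw [hxuv] at hxS ⊢
        obtain ⟨e1, e2⟩ := (memchar u v hu hv).mp hxS
        have hv0 : v ≠ 0 := by
          intro h; rw [h] at e2; exact hα0 (by linear_combination -e2)
        have h1 : (1 + a) * u ^ 2 = (1 + a) * (r * v) ^ 2 := by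
          linear_combination e1 - v ^ 2 * hr2
        have hu2 : u ^ 2 = (r * v) ^ 2 := mul_left_cancel₀ h1pa h1
        rcases aux_sq_eq hu2 with h' | h'
        · rw [h'] at e2
          have hvv : v ^ 2 = v₀ ^ 2 := by
            rw [hv₀2, eq_div_iff (mul_ne_zero hma2 hr0)]
            linear_combination e2
          rcases aux_sq_eq hvv with hv' | hv'
          · left; rw [h', hv']
          · right; rw [h', hv']; ring
        · exfalso
          rw [h'] at e2
          apply keyB
          refine ⟨v / v₀, hFdiv _ _ hv hv₀F, ?_⟩
          rw [div_pow, div_eq_iff (pow_ne_zero 2 hv₀0)]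
          rw [hv₀2, neg_one_mul, ← neg_div, eq_div_iff (mul_ne_zero hma2 hr0)]
          linear_combination -e2
      · intro hx
        rcases hx with h | h <;> rw [h]
        · exact hx₀S
        · have hrw : -(r * v₀ + v₀ * β) = -(r * v₀) + -v₀ * β := by ring
          rw [hrw]
          exact hx₀S'
    rw [Seq, Set.ncard_pair hne]
end
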